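/- arXiv:1506.00149 — 11 statements merged into one kernel-verified Lean document; each statement's English description precedes it below -/
import Mathlib

section
/- For every k ∈ ℕ and a ∈ ℤ, if lcm(1, 2, ..., k) divides a, then the function x ↦ a · C(x, k) from ℕ to ℤ is congruence preserving, i.e. for all x, y ∈ ℕ, x - y divides a·C(x,k) - a·C(y,k). -/
def lcmUpTo (k : ℕ) : ℕ := (Finset.Icc 1 k).lcm id

lemma succ_dvd_lcmUpTo {i k : ℕ} (h : i < k) : (i+1) ∣ lcmUpTo k :=
  Finset.dvd_lcm (by simp [Finset.mem_Icc]; omega)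

lemma key (k n y : ℕ) :
    (n : ℤ) ∣ (lcmUpTo k : ℤ) * ((n + y).choose k : ℤ) - (lcmUpTo k : ℤ) * (y.choose k : ℤ) := by
  rcases n with _ | m
  · simp
  have hv : (((m+1) + y).choose k : ℤ)
      = ∑ i ∈ Finset.range (k+1), ((m+1).choose i : ℤ) * (y.choose (k - i) : ℤ) := by
    rw [Nat.add_choose_eq, Finset.Nat.sum_antidiagonal_eq_sum_range_succ_mk]
    push_cast
    rfl
  rw [hv, Finset.mul_sum, Finset.sum_range_succ']
  simp only [Nat.choose_zero_right, Nat.cast_one, one_mul, Nat.sub_zero]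
  rw [add_sub_cancel_right]
  apply Finset.dvd_sum
  intro i hi
  obtain ⟨c, hc⟩ := succ_dvd_lcmUpTo (Finset.mem_range.mp hi)
  have hch : ((i+1 : ℕ) : ℤ) * ((m+1).choose (i+1) : ℤ) = ((m+1 : ℕ) : ℤ) * (m.choose i : ℤ) := by
    have h1 := Nat.add_one_mul_choose_eq m i
    zify at h1
    push_cast
    linarith
  refine ⟨(c : ℤ) * (m.choose i : ℤ) * (y.choose (k - (i+1)) : ℤ), ?_⟩
  calc (lcmUpTo k : ℤ) * (((m+1).choose (i+1) : ℤ) * (y.choose (k - (i+1)) : ℤ))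
      = ((i+1 : ℕ) : ℤ) * ((m+1).choose (i+1) : ℤ) * ((c : ℤ) * (y.choose (k - (i+1)) : ℤ)) := by
        rw [hc]; push_cast; ring
    _ = ((m+1 : ℕ) : ℤ) * ((c : ℤ) * (m.choose i : ℤ) * (y.choose (k - (i+1)) : ℤ)) := by
        rw [hch]; ring

theorem stmt_4 (k : ℕ) (a : ℤ) (h : (lcmUpTo k : ℤ) ∣ a) (x y : ℕ) :
    (x : ℤ) - y ∣ a * (x.choose k) - a * (y.choose k) := by
  obtain ⟨c, rfl⟩ := h
  rcases le_total y x with hxy | hxy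
  · obtain ⟨n, rfl⟩ := Nat.exists_eq_add_of_le hxy
    have := key k n y
    have h2 : ((y + n : ℕ) : ℤ) - y = (n : ℤ) := by push_cast; ring
    rw [h2]
    have : (n : ℤ) ∣ (lcmUpTo k : ℤ) * ((y + n).choose k : ℤ) - (lcmUpTo k : ℤ) * (y.choose k : ℤ) := by
      rw [Nat.add_comm y n] at *
      exact key k n y
    have h4 : (lcmUpTo k : ℤ) * c * ((y+n).choose k : ℤ) - (lcmUpTo k : ℤ) * c * (y.choose k : ℤ)
        = c * ((lcmUpTo k : ℤ) * ((y + n).choose k : ℤ) - (lcmUpTo k : ℤ) * (y.choose k : ℤ)) := by ring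
    rw [h4]
    exact Dvd.dvd.mul_left this c
  · obtain ⟨n, rfl⟩ := Nat.exists_eq_add_of_le hxy
    have h2 : ((x : ℤ) - (x + n : ℕ)) = -(n : ℤ) := by push_cast; ring
    rw [h2]
    rw [neg_dvd]
    have : (n : ℤ) ∣ (lcmUpTo k : ℤ) * ((x + n).choose k : ℤ) - (lcmUpTo k : ℤ) * (x.choose k : ℤ) := by
      rw [Nat.add_comm x n]
      exact key k n x
    have h3 : (lcmUpTo k : ℤ) * c * ((x.choose k) : ℤ) - (lcmUpTo k : ℤ) * c * ((x+n).choose k : ℤ)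
        = -(c * ((lcmUpTo k : ℤ) * ((x + n).choose k : ℤ) - (lcmUpTo k : ℤ) * (x.choose k : ℤ))) := by ring
    rw [h3]
    exact dvd_neg.mpr (this.mul_left c)
end

section
/- Let m = p_1^{α_1} ··· p_ℓ^{α_ℓ} divide n, and let ν(m) = max_i p_i^{α_i}. A function f : ℤ/nℤ → ℤ/mℤ is congruence preserving if and only if there exist integers a_0, ..., a_{ν(m)-1} with lcm(1,...,k) dividing a_k for each k, such that f(x) = Σ_{k=0}^{ν(m)-1} (a_k mod m) · (C(ι_n(x), k) mod m) for all x ∈ ℤ/nℤ. -/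
/-- `ν(m) = max_i p_i^{α_i}` where `m = p_1^{α_1} ⋯ p_ℓ^{α_ℓ}`. -/
def nu (m : ℕ) : ℕ := m.primeFactors.sup fun p => p ^ m.factorization p

section Helpers

/-- absorption: `d ∣ j * C(d, j)` for `j ≥ 1`. -/
lemma dvd_mul_choose (d j : ℕ) (hj : 0 < j) : d ∣ j * d.choose j := by
  cases d with
  | zero => simp [Nat.choose_eq_zero_of_lt hj]
  | succ e =>
    cases j with
    | zero => omega
    | succ i =>
      refine ⟨e.choose i, ?_⟩
      rw [Nat.mul_comm (i+1) ((e+1).choose (i+1)), ← Nat.add_one_mul_choose_eq]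

lemma dvd_lcmUpTo {j k : ℕ} (h1 : 1 ≤ j) (h2 : j ≤ k) : j ∣ lcmUpTo k :=
  Finset.dvd_lcm (by simp [Finset.mem_Icc]; omega)

/-- key divisibility for the easy direction, difference form -/
lemma int_dvd_lcm_mul_choose_sub_aux (c d k : ℕ) :
    (d : ℤ) ∣ (lcmUpTo k : ℤ) * (((c + d).choose k : ℤ) - (c.choose k : ℤ)) := by
  rw [Nat.add_choose_eq]
  rw [← Finset.add_sum_erase _ _ (show ((k, 0) : ℕ × ℕ) ∈ Finset.HasAntidiagonal.antidiagonal k by simp)]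
  simp only [Nat.choose_zero_right, mul_one]
  push_cast
  rw [add_sub_cancel_left, Finset.mul_sum]
  refine Finset.dvd_sum fun p hp => ?_
  have hpne := (Finset.mem_erase.mp hp).1
  have hpmem := Finset.HasAntidiagonal.mem_antidiagonal.mp (Finset.mem_erase.mp hp).2
  have hj : 0 < p.2 := by
    rcases Nat.eq_zero_or_pos p.2 with h | h
    · exfalso; apply hpne; ext <;> simp [h, ← hpmem]
    · exact h
  have hjk : p.2 ≤ k := by omega
  obtain ⟨u, hu⟩ := dvd_lcmUpTo hj hjk
  obtain ⟨v, hv⟩ := dvd_mul_choose d p.2 hj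
  refine ⟨(u : ℤ) * c.choose p.1 * v, ?_⟩
  have hu' : (lcmUpTo k : ℤ) = p.2 * u := by exact_mod_cast hu
  have hv' : ((p.2 : ℤ)) * (d.choose p.2 : ℤ) = d * v := by exact_mod_cast hv
  calc (lcmUpTo k : ℤ) * ((c.choose p.1 : ℤ) * (d.choose p.2 : ℤ))
      = (c.choose p.1 : ℤ) * u * ((p.2 : ℤ) * (d.choose p.2 : ℤ)) := by rw [hu']; ring
    _ = (d : ℤ) * ((u : ℤ) * c.choose p.1 * v) := by rw [hv']; ring

lemma int_dvd_lcm_mul_choose_sub (b c k : ℕ) :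
    ((b : ℤ) - c) ∣ (lcmUpTo k : ℤ) * ((b.choose k : ℤ) - (c.choose k : ℤ)) := by
  rcases le_total c b with h | h
  · obtain ⟨d, rfl⟩ := Nat.exists_eq_add_of_le h
    simpa using int_dvd_lcm_mul_choose_sub_aux c d k
  · obtain ⟨d, rfl⟩ := Nat.exists_eq_add_of_le h
    have := int_dvd_lcm_mul_choose_sub_aux b d k
    push_cast at this ⊢
    rw [show (b:ℤ) - (b + d) = -d by ring]
    rw [show (lcmUpTo k : ℤ) * ((b.choose k :ℤ) - ((b+d).choose k : ℤ))
        = -((lcmUpTo k : ℤ) * (((b+d).choose k :ℤ) - (b.choose k : ℤ))) by ring]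
    exact (neg_dvd.mpr (dvd_neg.mpr this))
open Finset fwdDiff

lemma pow_dvd_choose_mul_gcd {p c i : ℕ} (hp : p.Prime) (hi : 0 < i) :
    p ^ c ∣ (p ^ c).choose i * Nat.gcd i (p ^ c) := by
  set v := i.factorization p with hv
  have hdvd : p ^ c ∣ i * (p ^ c).choose i := dvd_mul_choose (p ^ c) i hi
  rcases le_or_gt c v with h | h
  · have : p ^ c ∣ i := dvd_trans (pow_dvd_pow p h) (Nat.ordProj_dvd i p)
    exact Dvd.dvd.mul_left (Nat.dvd_gcd this dvd_rfl) _
  · have hcop : Nat.Coprime (p ^ c) (i / p ^ v) :=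
      Nat.Coprime.pow_left c (Nat.coprime_ordCompl hp hi.ne')
    have h2 : p ^ c ∣ p ^ v * (p ^ c).choose i := by
      refine hcop.dvd_of_dvd_mul_right ?_
      have he : p ^ v * (p ^ c).choose i * (i / p ^ v) = i * (p ^ c).choose i := by
        rw [mul_comm (p ^ v * (p ^ c).choose i), ← mul_assoc, mul_comm (i / p ^ v),
          Nat.ordProj_mul_ordCompl_eq_self]
      rw [he]; exact hdvd
    have h3 : p ^ v ∣ Nat.gcd i (p ^ c) :=
      Nat.dvd_gcd (Nat.ordProj_dvd i p) (pow_dvd_pow p h.le)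
    calc p ^ c ∣ (p ^ c).choose i * p ^ v := by rwa [mul_comm] at h2
      _ ∣ (p ^ c).choose i * Nat.gcd i (p ^ c) := mul_dvd_mul_left _ h3

lemma key_q {p c : ℕ} (hp : p.Prime) (g : ℕ → ℤ)
    (H : ∀ a d : ℕ, ((Nat.gcd d (p ^ c) : ℕ) : ℤ) ∣ g (a + d) - g a) :
    ((p ^ c : ℕ) : ℤ) ∣ (fwdDiff 1)^[p ^ c] g 0 := by
  set q := p ^ c with hq
  have hq1 : 1 ≤ q := Nat.one_le_pow _ _ hp.pos
  rw [fwdDiff_iter_eq_sum_shift]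
  simp only [smul_eq_mul, zero_add, smul_eq_mul, mul_one]
  have hsum : ∑ k ∈ range (q + 1), ((-1 : ℤ) ^ (q - k) * (q.choose k : ℤ)) = 0 := by
    rw [← Finset.sum_range_reflect]
    have : ∀ k ∈ range (q + 1), ((-1:ℤ) ^ (q - (q - k)) * (q.choose (q - k) : ℤ))
        = (-1:ℤ) ^ k * (q.choose k : ℤ) := by
      intro k hk
      rw [Finset.mem_range] at hk
      rw [Nat.sub_sub_self (by omega), Nat.choose_symm (by omega)]
    rw [Finset.sum_congr rfl (by intro k hk; exact this k (by simpa using hk))]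
    rw [Int.alternating_sum_range_choose, if_neg (by omega)]
  have hrw : ∑ k ∈ range (q + 1), ((-1 : ℤ) ^ (q - k) * (q.choose k : ℤ)) * g k
      = ∑ k ∈ range (q + 1), ((-1 : ℤ) ^ (q - k) * (q.choose k : ℤ)) * (g k - g 0) := by
    rw [← sub_eq_zero]
    rw [← Finset.sum_sub_distrib]
    have : ∀ k, ((-1 : ℤ) ^ (q - k) * (q.choose k : ℤ)) * g k
        - ((-1 : ℤ) ^ (q - k) * (q.choose k : ℤ)) * (g k - g 0)
        = ((-1 : ℤ) ^ (q - k) * (q.choose k : ℤ)) * g 0 := by intro k; ring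
    rw [Finset.sum_congr rfl fun k _ => this k, ← Finset.sum_mul, hsum, zero_mul]
  rw [hrw]
  refine Finset.dvd_sum fun k hk => ?_
  rcases Nat.eq_zero_or_pos k with rfl | hkpos
  · simp
  obtain ⟨t, ht⟩ := H 0 k
  simp only [zero_add] at ht
  obtain ⟨s, hs⟩ := pow_dvd_choose_mul_gcd (c := c) hp hkpos
  refine ⟨(-1 : ℤ) ^ (q - k) * s * t, ?_⟩
  rw [ht]
  have hs' : (q.choose k : ℤ) * (Nat.gcd k q : ℤ) = (q : ℤ) * s := by exact_mod_cast hs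
  calc (-1 : ℤ) ^ (q - k) * (q.choose k : ℤ) * ((Nat.gcd k q : ℤ) * t)
      = ((q.choose k : ℤ) * (Nat.gcd k q : ℤ)) * ((-1:ℤ) ^ (q - k) * t) := by ring
    _ = (q : ℤ) * ((-1 : ℤ) ^ (q - k) * s * t) := by rw [hs']; ring

lemma H_fwdDiff {m : ℕ} (g : ℕ → ℤ)
    (H : ∀ a d : ℕ, ((Nat.gcd d m : ℕ) : ℤ) ∣ g (a + d) - g a) :
    ∀ a d : ℕ, ((Nat.gcd d m : ℕ) : ℤ) ∣ (fwdDiff 1 g) (a + d) - (fwdDiff 1 g) a := by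
  intro a d
  have key : (fwdDiff 1 g) (a + d) - (fwdDiff 1 g) a
      = (g (a + 1 + d) - g (a + 1)) - (g (a + d) - g a) := by
    simp only [fwdDiff, show a + d + 1 = a + 1 + d from by omega]
    ring
  rw [key]
  exact dvd_sub (H (a + 1) d) (H a d)

lemma H_iter {m : ℕ} (g : ℕ → ℤ)
    (H : ∀ a d : ℕ, ((Nat.gcd d m : ℕ) : ℤ) ∣ g (a + d) - g a) (j : ℕ) :
    ∀ a d : ℕ, ((Nat.gcd d m : ℕ) : ℤ) ∣ ((fwdDiff 1)^[j] g) (a + d) - ((fwdDiff 1)^[j] g) a := by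
  induction j generalizing g with
  | zero => simpa using H
  | succ i ih =>
    rw [Function.iterate_succ_apply]
    exact ih _ (H_fwdDiff g H)

lemma key_main {m : ℕ} (g : ℕ → ℤ)
    (H : ∀ a d : ℕ, ((Nat.gcd d m : ℕ) : ℤ) ∣ g (a + d) - g a)
    {p c k : ℕ} (hp : p.Prime) (hdvd : p ^ c ∣ m) (hle : p ^ c ≤ k) :
    ((p ^ c : ℕ) : ℤ) ∣ (fwdDiff 1)^[k] g 0 := by
  obtain ⟨r, rfl⟩ : ∃ r, k = p ^ c + r := ⟨k - p ^ c, by omega⟩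
  rw [Function.iterate_add_apply]
  refine key_q hp ((fwdDiff 1)^[r] g) fun a d => ?_
  have h1 : Nat.gcd d (p ^ c) ∣ Nat.gcd d m :=
    Nat.dvd_gcd (Nat.gcd_dvd_left _ _) ((Nat.gcd_dvd_right d (p ^ c)).trans hdvd)
  exact dvd_trans (Int.natCast_dvd_natCast.mpr h1) (H_iter g H r a d)
open Finset

lemma lcmUpTo_ne_zero (k : ℕ) : lcmUpTo k ≠ 0 := by
  intro h
  rw [lcmUpTo, Finset.lcm_eq_zero_iff] at h
  obtain ⟨i, hi, h0⟩ := h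
  simp only [Finset.mem_coe, Finset.mem_Icc, id] at hi h0
  omega

lemma lcmUpTo_succ (k : ℕ) : lcmUpTo (k + 1) = Nat.lcm (k + 1) (lcmUpTo k) := by
  rw [lcmUpTo, lcmUpTo, ← Finset.insert_Icc_right_eq_Icc_add_one (by omega), Finset.lcm_insert]
  rfl

lemma pow_dvd_lcmUpTo_le {p c : ℕ} (hp : p.Prime) (hc : c ≠ 0) :
    ∀ {k : ℕ}, p ^ c ∣ lcmUpTo k → p ^ c ≤ k := by
  intro k
  induction k with
  | zero =>
    intro h
    rw [show lcmUpTo 0 = 1 from rfl, Nat.dvd_one, pow_eq_one_iff, or_iff_left hc] at h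
    exact absurd h hp.ne_one
  | succ i ih =>
    intro h
    rw [lcmUpTo_succ] at h
    have h1 : i + 1 ≠ 0 := by omega
    have h2 := lcmUpTo_ne_zero i
    rw [Nat.Prime.pow_dvd_iff_le_factorization hp (Nat.lcm_ne_zero h1 h2),
      Nat.factorization_lcm h1 h2, Finsupp.sup_apply] at h
    rcases le_max_iff.mp h with h3 | h3
    · rw [← Nat.Prime.pow_dvd_iff_le_factorization hp h1] at h3
      exact Nat.le_of_dvd (by omega) h3
    · rw [← Nat.Prime.pow_dvd_iff_le_factorization hp h2] at h3
      exact (ih h3).trans (by omega)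
end Helpers

section Main

open Finset

theorem stmt_6 (n m : ℕ) (hn : 0 < n) (hm : 0 < m) (hmn : m ∣ n)
    (f : ZMod n → ZMod m) :
    (∀ x y : ZMod n, ZMod.castHom hmn (ZMod m) (x - y) ∣ f x - f y) ↔
    ∃ a : ℕ → ℤ, (∀ k < nu m, (lcmUpTo k : ℤ) ∣ a k) ∧
      ∀ x : ZMod n,
        f x = ∑ k ∈ Finset.range (nu m),
          (a k : ZMod m) * ((x.val.choose k : ℕ) : ZMod m) := by
  haveI : NeZero n := ⟨hn.ne'⟩
  haveI : NeZero m := ⟨hm.ne'⟩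
  constructor
  · -- hard direction
    intro hf
    set g : ℕ → ℤ := fun i => ((f ((i : ℕ) : ZMod n)).val : ℤ) with hgdef
    set D : ℕ → ℤ := fun k => (fwdDiff 1)^[k] g 0 with hDdef
    -- congruence property of g
    have Hg : ∀ a d : ℕ, ((Nat.gcd d m : ℕ) : ℤ) ∣ g (a + d) - g a := by
      intro a d
      have h1 := hf (((a + d : ℕ)) : ZMod n) ((a : ℕ) : ZMod n)
      have h2 : (((a + d : ℕ) : ZMod n) - ((a : ℕ) : ZMod n)) = ((d : ℕ) : ZMod n) := by
        push_cast; ring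
      rw [h2, map_natCast] at h1
      obtain ⟨w, hw⟩ := h1
      set z := f (((a + d : ℕ)) : ZMod n) - f ((a : ℕ) : ZMod n) with hz
      have hzval : ((Nat.gcd d m : ℕ) : ℤ) ∣ (z.val : ℤ) := by
        have h3 : (((d * w.val : ℕ) : ZMod m)) = ((z.val : ℕ) : ZMod m) := by
          push_cast
          rw [ZMod.natCast_val, ZMod.cast_id, ZMod.natCast_val, ZMod.cast_id, ← hw]
        have h4 := (ZMod.natCast_eq_natCast_iff _ _ _).mp h3
        have h5 : (m : ℤ) ∣ (z.val : ℤ) - ((d * w.val : ℕ) : ℤ) := h4.dvd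
        have h6 : ((Nat.gcd d m : ℕ) : ℤ) ∣ ((d * w.val : ℕ) : ℤ) := by
          exact_mod_cast Int.natCast_dvd_natCast.mpr (Dvd.dvd.mul_right (Nat.gcd_dvd_left d m) _)
        have h7 : ((Nat.gcd d m : ℕ) : ℤ) ∣ (z.val : ℤ) - ((d * w.val : ℕ) : ℤ) :=
          dvd_trans (Int.natCast_dvd_natCast.mpr (Nat.gcd_dvd_right d m)) h5
        have := dvd_add h6 h7
        simpa using this
      have h8 : (m : ℤ) ∣ (g (a + d) - g a) - (z.val : ℤ) := by
        have h9 : (((g (a + d) - g a - (z.val : ℤ)) : ℤ) : ZMod m) = 0 := by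
          push_cast [hgdef, hz]
          rw [ZMod.natCast_val, ZMod.cast_id, ZMod.natCast_val, ZMod.cast_id,
            ZMod.natCast_val, ZMod.cast_id]
          ring
        exact (ZMod.intCast_zmod_eq_zero_iff_dvd _ _).mp h9
      have h10 : ((Nat.gcd d m : ℕ) : ℤ) ∣ (g (a + d) - g a) - (z.val : ℤ) :=
        dvd_trans (Int.natCast_dvd_natCast.mpr (Nat.gcd_dvd_right d m)) h8
      have := dvd_add hzval h10
      simpa using this
    -- Newton expansion
    have newton : ∀ x : ZMod n,
        f x = ∑ k ∈ Finset.range n, ((D k : ZMod m) * ((x.val.choose k : ℕ) : ZMod m)) := by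
      intro x
      have hj : x.val < n := ZMod.val_lt x
      have h0 : g x.val = ∑ k ∈ Finset.range n, (D k) * ((x.val.choose k : ℕ) : ℤ) := by
        have h1 := shift_eq_sum_fwdDiff_iter 1 g x.val 0
        simp only [zero_add, smul_eq_mul, mul_one] at h1
        rw [h1, Finset.sum_subset (Finset.range_subset_range.mpr (show x.val + 1 ≤ n by omega))
          (fun k _ hk2 => by
            rw [Finset.mem_range, not_lt] at hk2
            rw [Nat.choose_eq_zero_of_lt (by omega), zero_smul])]
        exact Finset.sum_congr rfl fun k _ => (nsmul_eq_mul _ _).trans (mul_comm _ _)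
      have h2 : f x = ((g x.val : ℤ) : ZMod m) := by
        have e1 : ((x.val : ℕ) : ZMod n) = x := by
          rw [ZMod.natCast_val, ZMod.cast_id]
        simp only [hgdef, e1]
        rw [Int.cast_natCast, ZMod.natCast_val, ZMod.cast_id]
      rw [h2, h0]
      push_cast
      rfl
    -- divisibility facts for D
    have hDk : ∀ k : ℕ, ((Nat.gcd (lcmUpTo k) m : ℕ) : ℤ) ∣ D k := by
      intro k
      rw [Int.natCast_dvd]
      rw [Nat.dvd_iff_prime_pow_dvd_dvd]
      intro p c hp hpc
      rcases Nat.eq_zero_or_pos c with rfl | hc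
      · simp
      have hpp : p.Prime := hp
      have hpl : p ^ c ∣ lcmUpTo k := hpc.trans (Nat.gcd_dvd_left _ _)
      have hpm : p ^ c ∣ m := hpc.trans (Nat.gcd_dvd_right _ _)
      have hle : p ^ c ≤ k := pow_dvd_lcmUpTo_le hpp hc.ne' hpl
      have := key_main g Hg hpp hpm hle
      rwa [Int.natCast_dvd] at this
    have hDm : ∀ k : ℕ, nu m ≤ k → (m : ℤ) ∣ D k := by
      intro k hk
      rw [Int.natCast_dvd]
      rw [Nat.dvd_iff_prime_pow_dvd_dvd]
      intro p c hp hpc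
      rcases Nat.eq_zero_or_pos c with rfl | hc
      · simp
      have hpp : p.Prime := hp
      have hple : p ^ c ≤ k := by
        have h1 : c ≤ m.factorization p :=
          (Nat.Prime.pow_dvd_iff_le_factorization hpp hm.ne').mp hpc
        have h2 : p ∈ m.primeFactors := by
          rw [Nat.mem_primeFactors]
          exact ⟨hpp, dvd_trans (dvd_pow_self p hc.ne') hpc, hm.ne'⟩
        calc p ^ c ≤ p ^ m.factorization p := Nat.pow_le_pow_right hpp.pos h1
          _ ≤ nu m := by unfold nu; exact Finset.le_sup (f := fun q => q ^ m.factorization q) h2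
          _ ≤ k := hk
      have := key_main g Hg hpp hpc hple
      rwa [Int.natCast_dvd] at this
    have hnun : nu m ≤ n :=
      Finset.sup_le fun p _ =>
        le_trans (Nat.le_of_dvd hm (Nat.ordProj_dvd m p)) (Nat.le_of_dvd hn hmn)
    -- construct a
    refine ⟨fun k => (D k / (Nat.gcd (lcmUpTo k) m : ℤ)) * (lcmUpTo k * Nat.gcdA (lcmUpTo k) m),
      fun k _ => ⟨(D k / (Nat.gcd (lcmUpTo k) m : ℤ)) * Nat.gcdA (lcmUpTo k) m, by ring⟩, ?_⟩
    intro x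
    have hmod : ∀ k : ℕ, (m : ℤ) ∣
        (D k / (Nat.gcd (lcmUpTo k) m : ℤ)) * (lcmUpTo k * Nat.gcdA (lcmUpTo k) m) - D k := by
      intro k
      have hb := Nat.gcd_eq_gcd_ab (lcmUpTo k) m
      have hD : D k = D k / (Nat.gcd (lcmUpTo k) m : ℤ) * (Nat.gcd (lcmUpTo k) m : ℤ) :=
        (Int.ediv_mul_cancel (hDk k)).symm
      refine ⟨-((D k / (Nat.gcd (lcmUpTo k) m : ℤ)) * Nat.gcdB (lcmUpTo k) m), ?_⟩
      calc (D k / (Nat.gcd (lcmUpTo k) m : ℤ)) * (lcmUpTo k * Nat.gcdA (lcmUpTo k) m) - D k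
          = (D k / (Nat.gcd (lcmUpTo k) m : ℤ)) * (lcmUpTo k * Nat.gcdA (lcmUpTo k) m)
            - D k / (Nat.gcd (lcmUpTo k) m : ℤ) * (Nat.gcd (lcmUpTo k) m : ℤ) := by rw [← hD]
        _ = (D k / (Nat.gcd (lcmUpTo k) m : ℤ)) *
              ((lcmUpTo k * Nat.gcdA (lcmUpTo k) m) - (Nat.gcd (lcmUpTo k) m : ℤ)) := by ring
        _ = m * -((D k / (Nat.gcd (lcmUpTo k) m : ℤ)) * Nat.gcdB (lcmUpTo k) m) := by
              rw [hb]; ring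
    rw [newton x, Finset.range_eq_Ico, ← Finset.sum_Ico_consecutive _ (Nat.zero_le (nu m)) hnun]
    have hzero : ∑ k ∈ Finset.Ico (nu m) n, ((D k : ZMod m) * ((x.val.choose k : ℕ) : ZMod m)) = 0 := by
      refine Finset.sum_eq_zero fun k hk => ?_
      have := (ZMod.intCast_zmod_eq_zero_iff_dvd (D k) m).mpr (hDm k (Finset.mem_Ico.mp hk).1)
      rw [this, zero_mul]
    rw [hzero, add_zero, ← Finset.range_eq_Ico]
    refine Finset.sum_congr rfl fun k _ => ?_
    congr 1
    have h := (ZMod.intCast_zmod_eq_zero_iff_dvd _ m).mpr (hmod k)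
    rw [Int.cast_sub, sub_eq_zero] at h
    exact h.symm
  · -- easy direction
    rintro ⟨a, ha, hrep⟩ x y
    rw [hrep x, hrep y, ← Finset.sum_sub_distrib]
    refine Finset.dvd_sum fun k hk => ?_
    obtain ⟨e, he⟩ := ha k (Finset.mem_range.mp hk)
    have key := int_dvd_lcm_mul_choose_sub x.val y.val k
    have hterm : ((x.val : ℤ) - (y.val : ℤ)) ∣
        a k * ((x.val.choose k : ℤ) - (y.val.choose k : ℤ)) := by
      rw [he]
      obtain ⟨t, ht⟩ := key
      exact ⟨e * t, by rw [mul_comm (lcmUpTo k : ℤ) e, mul_assoc, ht]; ring⟩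
    have hmap := map_dvd (Int.castRingHom (ZMod m)) hterm
    simp only [map_sub, map_mul, map_intCast, Int.coe_castRingHom] at hmap
    have hxy : (ZMod.castHom hmn (ZMod m)) (x - y)
        = (((x.val : ℤ) - (y.val : ℤ) : ℤ) : ZMod m) := by
      have hx : ((x.val : ℕ) : ZMod n) = x := by rw [ZMod.natCast_val, ZMod.cast_id]
      have hy : ((y.val : ℕ) : ZMod n) = y := by rw [ZMod.natCast_val, ZMod.cast_id]
      conv_lhs => rw [← hx, ← hy]
      rw [map_sub, map_natCast, map_natCast, Int.cast_sub, Int.cast_natCast, Int.cast_natCast]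
    rw [hxy]
    convert hmap using 1 <;> (push_cast; ring)

end Main
end

section
/- Suppose m divides n and s, and n, s both divide r. If f : ℤ/nℤ → ℤ/mℤ is congruence preserving, then there exists a congruence preserving g : ℤ/rℤ → ℤ/sℤ such that π_{s,m} ∘ g = f ∘ π_{r,n}. -/
lemma my_gcd_lcm_dvd (a b c : ℕ) :
    Nat.gcd (Nat.lcm a b) c ∣ Nat.lcm (Nat.gcd a c) (Nat.gcd b c) := by
  rcases eq_or_ne a 0 with rfl | ha
  · simpa using Nat.dvd_lcm_left _ _
  rcases eq_or_ne b 0 with rfl | hb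
  · simpa using Nat.dvd_lcm_right _ _
  rcases eq_or_ne c 0 with rfl | hc
  · simp
  have hlcm : Nat.lcm a b ≠ 0 := Nat.lcm_ne_zero ha hb
  have hg1 : Nat.gcd a c ≠ 0 := Nat.gcd_ne_zero_left ha
  have hg2 : Nat.gcd b c ≠ 0 := Nat.gcd_ne_zero_left hb
  have hL : Nat.gcd (Nat.lcm a b) c ≠ 0 := Nat.gcd_ne_zero_right hc
  have hR : Nat.lcm (Nat.gcd a c) (Nat.gcd b c) ≠ 0 := Nat.lcm_ne_zero hg1 hg2
  rw [← Nat.factorization_le_iff_dvd hL hR]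
  intro p
  rw [Nat.factorization_gcd hlcm hc, Nat.factorization_lcm hg1 hg2,
    Nat.factorization_lcm ha hb, Nat.factorization_gcd ha hc, Nat.factorization_gcd hb hc]
  simp only [Finsupp.inf_apply, Finsupp.sup_apply]
  omega

lemma my_merge2 (p q : ℕ) (a b : ℤ) (h : (Nat.gcd p q : ℤ) ∣ a - b) :
    ∃ z : ℤ, (p : ℤ) ∣ z - a ∧ (q : ℤ) ∣ z - b := by
  obtain ⟨c, hc⟩ := h
  refine ⟨a - p * Nat.gcdA p q * c, ⟨-(Nat.gcdA p q * c), by ring⟩, ⟨Nat.gcdB p q * c, ?_⟩⟩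
  have hb := Nat.gcd_eq_gcd_ab p q
  have : a - b = (↑p * Nat.gcdA p q + ↑q * Nat.gcdB p q) * c := by rw [← hb]; exact hc
  linarith [this]

lemma my_crt : ∀ (k : ℕ) (l : List (ℕ × ℤ)), l.length ≤ k →
    (∀ p ∈ l, ∀ q ∈ l, (Nat.gcd p.1 q.1 : ℤ) ∣ p.2 - q.2) →
    ∃ z : ℤ, ∀ p ∈ l, (p.1 : ℤ) ∣ z - p.2 := by
  intro k
  induction k with
  | zero =>
    intro l hl _
    have : l = [] := List.length_eq_zero_iff.mp (Nat.le_zero.mp hl)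
    exact ⟨0, by simp [this]⟩
  | succ k ih =>
    intro l hl hc
    match l with
    | [] => exact ⟨0, by simp⟩
    | [p] => exact ⟨p.2, fun q hq => by simp at hq; simp [hq]⟩
    | p :: q :: t =>
      -- merge p and q
      obtain ⟨z0, hz0p, hz0q⟩ := my_merge2 p.1 q.1 p.2 q.2
        (hc p (by simp) q (by simp))
      set l' : List (ℕ × ℤ) := (Nat.lcm p.1 q.1, z0) :: t with hl'
      have hlen' : l'.length ≤ k := by
        simp only [hl', List.length_cons]
        simp only [List.length_cons] at hl
        omega
      have key : ∀ r ∈ t, (Nat.gcd (Nat.lcm p.1 q.1) r.1 : ℤ) ∣ z0 - r.2 := by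
        intro r hr
        have h1 : (Nat.gcd p.1 r.1 : ℤ) ∣ z0 - r.2 := by
          have d1 : (Nat.gcd p.1 r.1 : ℤ) ∣ z0 - p.2 :=
            dvd_trans (Int.natCast_dvd_natCast.mpr (Nat.gcd_dvd_left _ _)) hz0p
          have d2 : (Nat.gcd p.1 r.1 : ℤ) ∣ p.2 - r.2 :=
            hc p (by simp) r (by simp [hr])
          have := dvd_add d1 d2
          simpa using this
        have h2 : (Nat.gcd q.1 r.1 : ℤ) ∣ z0 - r.2 := by
          have d1 : (Nat.gcd q.1 r.1 : ℤ) ∣ z0 - q.2 :=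
            dvd_trans (Int.natCast_dvd_natCast.mpr (Nat.gcd_dvd_left _ _)) hz0q
          have d2 : (Nat.gcd q.1 r.1 : ℤ) ∣ q.2 - r.2 :=
            hc q (by simp) r (by simp [hr])
          have := dvd_add d1 d2
          simpa using this
        have hlcm : (Nat.lcm (Nat.gcd p.1 r.1) (Nat.gcd q.1 r.1) : ℤ) ∣ z0 - r.2 := by
          have : ((Nat.gcd p.1 r.1 : ℤ)).natAbs ∣ (z0 - r.2).natAbs := by
            exact Int.natAbs_dvd_natAbs.mpr h1
          have h2' : ((Nat.gcd q.1 r.1 : ℤ)).natAbs ∣ (z0 - r.2).natAbs := by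
            exact Int.natAbs_dvd_natAbs.mpr h2
          simp only [Int.natAbs_natCast] at this h2'
          have := Nat.lcm_dvd this h2'
          have h3 : ((Nat.lcm (Nat.gcd p.1 r.1) (Nat.gcd q.1 r.1) : ℤ)) ∣ ((z0 - r.2).natAbs : ℤ) :=
            Int.natCast_dvd_natCast.mpr this
          exact h3.trans (Int.natAbs_dvd.mpr dvd_rfl)
        exact dvd_trans (Int.natCast_dvd_natCast.mpr (my_gcd_lcm_dvd p.1 q.1 r.1)) hlcm
      have hc' : ∀ a ∈ l', ∀ b ∈ l', (Nat.gcd a.1 b.1 : ℤ) ∣ a.2 - b.2 := by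
        intro a ha b hb
        simp only [hl', List.mem_cons] at ha hb
        rcases ha with rfl | ha
        · rcases hb with rfl | hb
          · simp
          · exact key b hb
        · rcases hb with rfl | hb
          · rw [Nat.gcd_comm]
            have := key a ha
            rcases this with ⟨c, hcc⟩
            exact ⟨-c, by linarith⟩
          · exact hc a (by simp [ha]) b (by simp [hb])
      obtain ⟨z, hz⟩ := ih l' hlen' hc'
      refine ⟨z, ?_⟩
      intro w hw
      simp only [List.mem_cons] at hw
      have hzl : (Nat.lcm p.1 q.1 : ℤ) ∣ z - z0 := hz (Nat.lcm p.1 q.1, z0) List.mem_cons_self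
      rcases hw with rfl | rfl | hw
      · have h1 : (w.1 : ℤ) ∣ z - z0 :=
          dvd_trans (Int.natCast_dvd_natCast.mpr (Nat.dvd_lcm_left _ _)) hzl
        rcases h1 with ⟨c1, hc1⟩; rcases hz0p with ⟨c2, hc2⟩
        exact ⟨c1 + c2, by linarith⟩
      · have h1 : (w.1 : ℤ) ∣ z - z0 :=
          dvd_trans (Int.natCast_dvd_natCast.mpr (Nat.dvd_lcm_right _ _)) hzl
        rcases h1 with ⟨c1, hc1⟩; rcases hz0q with ⟨c2, hc2⟩
        exact ⟨c1 + c2, by linarith⟩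
      · exact hz w (by simp [hl', hw])

lemma my_ext (m : ℕ) (F : ℤ → ℤ)
    (hF : ∀ X Y : ℤ, ∀ d : ℕ, (d : ℤ) ∣ X - Y → d ∣ m → (d : ℤ) ∣ F X - F Y)
    (T : Finset ℤ) (G : ℤ → ℤ)
    (hGm : ∀ X ∈ T, (m : ℤ) ∣ G X - F X)
    (hGcp : ∀ X ∈ T, ∀ Y ∈ T, (X - Y) ∣ G X - G Y)
    (t : ℤ) :
    ∃ G' : ℤ → ℤ, (∀ X ∈ insert t T, (m : ℤ) ∣ G' X - F X) ∧
      (∀ X ∈ insert t T, ∀ Y ∈ insert t T, (X - Y) ∣ G' X - G' Y) ∧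
      ∀ X, X ≠ t → G' X = G X := by
  set l : List (ℕ × ℤ) := (m, F t) :: T.toList.map (fun Y => ((t - Y).natAbs, G Y)) with hl
  have hmem : ∀ p ∈ l, p = (m, F t) ∨ ∃ Y ∈ T, p = ((t - Y).natAbs, G Y) := by
    intro p hp
    simp only [hl, List.mem_cons, List.mem_map, Finset.mem_toList] at hp
    rcases hp with rfl | ⟨Y, hY, rfl⟩
    · exact Or.inl rfl
    · exact Or.inr ⟨Y, hY, rfl⟩
  have hcompat : ∀ p ∈ l, ∀ q ∈ l, (Nat.gcd p.1 q.1 : ℤ) ∣ p.2 - q.2 := by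
    have base : ∀ Y ∈ T, (Nat.gcd m (t - Y).natAbs : ℤ) ∣ F t - G Y := by
      intro Y hY
      set d := Nat.gcd m (t - Y).natAbs with hd
      have hdm : d ∣ m := Nat.gcd_dvd_left _ _
      have hdt : (d : ℤ) ∣ t - Y :=
        dvd_trans (Int.natCast_dvd_natCast.mpr (Nat.gcd_dvd_right _ _))
          (Int.natAbs_dvd.mpr dvd_rfl)
      have h1 : (d : ℤ) ∣ F t - F Y := hF t Y d hdt hdm
      have h2 : (d : ℤ) ∣ G Y - F Y :=
        dvd_trans (Int.natCast_dvd_natCast.mpr hdm) (hGm Y hY)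
      have := dvd_sub h1 h2
      simpa using this
    intro p hp q hq
    rcases hmem p hp with rfl | ⟨Y, hY, rfl⟩ <;> rcases hmem q hq with rfl | ⟨Y', hY', rfl⟩
    · simp
    · exact base Y' hY'
    · rw [Nat.gcd_comm]
      obtain ⟨c, hc⟩ := base Y hY
      exact ⟨-c, by linear_combination -hc⟩
    · have hd1 : ((Nat.gcd (t - Y).natAbs (t - Y').natAbs : ℕ) : ℤ) ∣ t - Y :=
        dvd_trans (Int.natCast_dvd_natCast.mpr (Nat.gcd_dvd_left _ _)) (Int.natAbs_dvd.mpr dvd_rfl)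
      have hd2 : ((Nat.gcd (t - Y).natAbs (t - Y').natAbs : ℕ) : ℤ) ∣ t - Y' :=
        dvd_trans (Int.natCast_dvd_natCast.mpr (Nat.gcd_dvd_right _ _)) (Int.natAbs_dvd.mpr dvd_rfl)
      have hdyy : ((Nat.gcd (t - Y).natAbs (t - Y').natAbs : ℕ) : ℤ) ∣ Y - Y' := by
        have := dvd_sub hd2 hd1
        simpa using this
      exact dvd_trans hdyy (hGcp Y hY Y' hY')
  obtain ⟨z, hz⟩ := my_crt l.length l le_rfl hcompat
  have hzm : (m : ℤ) ∣ z - F t := hz (m, F t) List.mem_cons_self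
  have hzT : ∀ Y ∈ T, (t - Y) ∣ z - G Y := by
    intro Y hY
    have := hz ((t - Y).natAbs, G Y)
      (by simp only [hl, List.mem_cons, List.mem_map, Finset.mem_toList]
          exact Or.inr ⟨Y, hY, rfl⟩)
    exact Int.natAbs_dvd.mp this
  refine ⟨Function.update G t z, ?_, ?_, fun X hX => Function.update_of_ne hX _ _⟩
  · intro X hX
    rcases eq_or_ne X t with heq | hne
    · rw [heq, Function.update_self]; exact hzm
    · rw [Function.update_of_ne hne]
      rcases Finset.mem_insert.mp hX with heq | hXT
      · exact absurd heq hne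
      · exact hGm X hXT
  · intro X hX Y hY
    rcases eq_or_ne X t with heqX | hneX <;> rcases eq_or_ne Y t with heqY | hneY
    · rw [heqX, heqY]; simp
    · have hYT : Y ∈ T := by
        rcases Finset.mem_insert.mp hY with heq | h; exact absurd heq hneY; exact h
      rw [heqX, Function.update_self, Function.update_of_ne hneY]
      exact hzT Y hYT
    · have hXT : X ∈ T := by
        rcases Finset.mem_insert.mp hX with heq | h; exact absurd heq hneX; exact h
      rw [heqY, Function.update_self, Function.update_of_ne hneX]
      obtain ⟨c, hc⟩ := hzT X hXT
      exact ⟨c, by linear_combination -hc⟩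
    · have hXT : X ∈ T := by
        rcases Finset.mem_insert.mp hX with heq | h; exact absurd heq hneX; exact h
      have hYT : Y ∈ T := by
        rcases Finset.mem_insert.mp hY with heq | h; exact absurd heq hneY; exact h
      rw [Function.update_of_ne hneX, Function.update_of_ne hneY]
      exact hGcp X hXT Y hYT

lemma my_global (m : ℕ) (F : ℤ → ℤ)
    (hF : ∀ X Y : ℤ, ∀ d : ℕ, (d : ℤ) ∣ X - Y → d ∣ m → (d : ℤ) ∣ F X - F Y) :
    ∃ G : ℤ → ℤ, (∀ X : ℤ, (m : ℤ) ∣ G X - F X) ∧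
      ∀ X Y : ℤ, (X - Y) ∣ G X - G Y := by
  set Q : ℕ → (ℤ → ℤ) → Prop := fun N G =>
    (∀ X : ℤ, X.natAbs ≤ N → (m : ℤ) ∣ G X - F X) ∧
    (∀ X Y : ℤ, X.natAbs ≤ N → Y.natAbs ≤ N → (X - Y) ∣ G X - G Y) with hQ
  have memIcc : ∀ (N : ℕ) (X : ℤ), X ∈ Finset.Icc (-(N : ℤ)) N ↔ X.natAbs ≤ N := by
    intro N X; rw [Finset.mem_Icc]; omega
  have step : ∀ (N : ℕ) (Gp : {G : ℤ → ℤ // Q N G}),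
      ∃ G' : {G' : ℤ → ℤ // Q (N + 1) G'}, ∀ X : ℤ, X.natAbs ≤ N → G'.1 X = Gp.1 X := by
    rintro N ⟨G, hGm, hGcp⟩
    set T0 : Finset ℤ := Finset.Icc (-(N : ℤ)) N with hT0
    obtain ⟨G1, hG1m, hG1cp, hG1eq⟩ := my_ext m F hF T0 G
      (fun X hX => hGm X ((memIcc N X).mp hX))
      (fun X hX Y hY => hGcp X Y ((memIcc N X).mp hX) ((memIcc N Y).mp hY))
      ((N : ℤ) + 1)
    obtain ⟨G2, hG2m, hG2cp, hG2eq⟩ := my_ext m F hF (insert ((N : ℤ) + 1) T0) G1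
      hG1m hG1cp (-((N : ℤ) + 1))
    have hmem : ∀ X : ℤ, X.natAbs ≤ N + 1 →
        X ∈ insert (-((N : ℤ) + 1)) (insert ((N : ℤ) + 1) T0) := by
      intro X hX
      simp only [Finset.mem_insert, hT0, Finset.mem_Icc]
      omega
    refine ⟨⟨G2, ?_, ?_⟩, ?_⟩
    · intro X hX
      exact hG2m X (hmem X hX)
    · intro X Y hX hY
      exact hG2cp X (hmem X hX) Y (hmem Y hY)
    · intro X hX
      have h1 : X ≠ -((N : ℤ) + 1) := by omega
      have h2 : X ≠ (N : ℤ) + 1 := by omega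
      show G2 X = G X
      rw [hG2eq X h1, hG1eq X h2]
  choose stepF stepH using step
  have base : {G : ℤ → ℤ // Q 0 G} := ⟨F, by
    constructor
    · intro X _; simp
    · intro X Y hX hY
      have : X = 0 := by omega
      have hY0 : Y = 0 := by omega
      simp [this, hY0]⟩
  let A : (N : ℕ) → {G : ℤ → ℤ // Q N G} := fun N => Nat.rec base (fun k Ak => stepF k Ak) N
  have hsucc : ∀ N, A (N + 1) = stepF N (A N) := fun N => rfl
  have agree : ∀ (N M : ℕ), N ≤ M → ∀ X : ℤ, X.natAbs ≤ N → (A M).1 X = (A N).1 X := by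
    intro N M hNM
    induction M, hNM using Nat.le_induction with
    | base => intro X _; rfl
    | succ M hNM ih =>
      intro X hX
      rw [hsucc M]
      rw [stepH M (A M) X (le_trans hX hNM)]
      exact ih X hX
  refine ⟨fun X => (A X.natAbs).1 X, ?_, ?_⟩
  · intro X
    exact (A X.natAbs).2.1 X le_rfl
  · intro X Y
    set N := max X.natAbs Y.natAbs with hN
    have h1 : (A N).1 X = (A X.natAbs).1 X := agree X.natAbs N (le_max_left _ _) X le_rfl
    have h2 : (A N).1 Y = (A Y.natAbs).1 Y := agree Y.natAbs N (le_max_right _ _) Y le_rfl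
    show (X : ℤ) - Y ∣ (A X.natAbs).1 X - (A Y.natAbs).1 Y
    rw [← h1, ← h2]
    exact (A N).2.2 X Y (le_max_left _ _) (le_max_right _ _)

theorem stmt_7 (m n s r : ℕ) (hmn : m ∣ n) (hms : m ∣ s) (hnr : n ∣ r) (hsr : s ∣ r)
    (f : ZMod n → ZMod m)
    (hf : ∀ x y : ZMod n, ZMod.castHom hmn (ZMod m) (x - y) ∣ f x - f y) :
    ∃ g : ZMod r → ZMod s,
      (∀ x y : ZMod r, ZMod.castHom hsr (ZMod s) (x - y) ∣ g x - g y) ∧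
      ∀ x : ZMod r,
        ZMod.castHom hms (ZMod m) (g x) = f (ZMod.castHom hnr (ZMod n) x) := by
  choose F hFspec using fun X : ℤ => ZMod.intCast_surjective (f ((X : ℤ) : ZMod n))
  have hF : ∀ X Y : ℤ, ∀ d : ℕ, (d : ℤ) ∣ X - Y → d ∣ m → (d : ℤ) ∣ F X - F Y := by
    intro X Y d hdXY hdm
    obtain ⟨c, hc⟩ := hf ((X : ℤ) : ZMod n) ((Y : ℤ) : ZMod n)
    obtain ⟨C, hC⟩ := ZMod.intCast_surjective c
    have hcast : ZMod.castHom hmn (ZMod m) (((X : ℤ) : ZMod n) - ((Y : ℤ) : ZMod n))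
        = ((X - Y : ℤ) : ZMod m) := by
      rw [← Int.cast_sub, map_intCast]
    have hm : ((F X - F Y - (X - Y) * C : ℤ) : ZMod m) = 0 := by
      push_cast
      rw [hFspec X, hFspec Y, hC]
      rw [hcast] at hc
      rw [hc]
      push_cast
      ring
    have hmdvd : (m : ℤ) ∣ F X - F Y - (X - Y) * C :=
      (ZMod.intCast_zmod_eq_zero_iff_dvd _ _).mp hm
    have hd : (d : ℤ) ∣ F X - F Y - (X - Y) * C :=
      dvd_trans (Int.natCast_dvd_natCast.mpr hdm) hmdvd
    have := dvd_add hd (Dvd.dvd.mul_right hdXY C)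
    simpa using this
  obtain ⟨G, hGm, hGcp⟩ := my_global m F hF
  choose L hL using fun x : ZMod r => ZMod.intCast_surjective x
  refine ⟨fun x => ((G (L x) : ℤ) : ZMod s), ?_, ?_⟩
  · intro x y
    have key : ZMod.castHom hsr (ZMod s) (x - y) = ((L x - L y : ℤ) : ZMod s) := by
      conv_lhs => rw [← hL x, ← hL y]
      rw [← Int.cast_sub, map_intCast]
    rw [key]
    obtain ⟨c, hc⟩ := hGcp (L x) (L y)
    refine ⟨(c : ZMod s), ?_⟩
    have := congrArg (fun z : ℤ => (z : ZMod s)) hc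
    push_cast at this
    push_cast
    linear_combination this
  · intro x
    have h1 : ZMod.castHom hms (ZMod m) ((G (L x) : ℤ) : ZMod s) = ((G (L x) : ℤ) : ZMod m) :=
      map_intCast _ _
    have h2 : ((G (L x) : ℤ) : ZMod m) = ((F (L x) : ℤ) : ZMod m) := by
      have := hGm (L x)
      obtain ⟨c, hc⟩ := this
      have : ((G (L x) - F (L x) : ℤ) : ZMod m) = 0 := by
        rw [hc]; push_cast; simp
      push_cast at this
      linear_combination this
    have h3 : ZMod.castHom hnr (ZMod n) x = ((L x : ℤ) : ZMod n) := by
      conv_lhs => rw [← hL x]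
      rw [map_intCast]
    show ZMod.castHom hms (ZMod m) ((G (L x) : ℤ) : ZMod s) = f (ZMod.castHom hnr (ZMod n) x)
    rw [h1, h2, hFspec, h3]
end

section
/- Let Φ : ℤ_p → ℤ_p and for each n define φ_n : ℤ/p^nℤ → ℤ/p^nℤ by φ_n = π_n ∘ Φ ∘ ι_n, where π_n : ℤ_p → ℤ/p^nℤ is the projection and ι_n embeds ℤ/p^nℤ into ℤ_p as {0,...,p^n - 1}. Then Φ is congruence preserving if and only if Φ is 1-Lipschitz, every φ_n is congruence preserving, and Φ is the inverse limit of the φ_n (i.e. π_n ∘ Φ = φ_n ∘ π_n and π_{n,m} ∘ φ_n = φ_m ∘ π_{n,m} for m ≤ n). -/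
/-- In `ℤ_[p]`, divisibility is equivalent to the norm inequality. -/
lemma padicInt_dvd_iff_norm_le {p : ℕ} [Fact p.Prime] (a b : ℤ_[p]) :
    a ∣ b ↔ ‖b‖ ≤ ‖a‖ := by
  constructor
  · rintro ⟨c, rfl⟩
    rw [norm_mul]
    calc ‖a‖ * ‖c‖ ≤ ‖a‖ * 1 := by
          exact mul_le_mul_of_nonneg_left c.norm_le_one (norm_nonneg a)
      _ = ‖a‖ := mul_one _
  · intro hle
    rcases eq_or_ne a 0 with rfl | ha
    · rw [norm_zero] at hle
      have : b = 0 := norm_le_zero_iff.mp hle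
      simp [this]
    · set k := (a.valuation : ℤ).natAbs with hk
      have hval : (a.valuation : ℤ) = (k : ℤ) := by
        rw [hk, Int.natAbs_of_nonneg (Int.natCast_nonneg _)]
      have hnorm : ‖a‖ = (p : ℝ) ^ (-(k : ℤ)) := by
        rw [PadicInt.norm_eq_zpow_neg_valuation ha, hval]
      have hple : ‖b‖ ≤ (p : ℝ) ^ (-(k : ℤ)) := by rwa [hnorm] at hle
      have hmem : b ∈ (Ideal.span {(p : ℤ_[p]) ^ k} : Ideal ℤ_[p]) :=
        (PadicInt.norm_le_pow_iff_mem_span_pow b k).mp hple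
      have hdvd : (p : ℤ_[p]) ^ k ∣ b := Ideal.mem_span_singleton.mp hmem
      have hspec := PadicInt.unitCoeff_spec ha
      rw [hspec]
      exact (Units.mul_left_dvd).mpr hdvd

/-- Equality of projections to `ZMod (p ^ n)` is equivalent to divisibility by `p ^ n`. -/
lemma toZModPow_eq_iff_dvd {p : ℕ} [Fact p.Prime] (n : ℕ) (a b : ℤ_[p]) :
    PadicInt.toZModPow n a = PadicInt.toZModPow n b ↔ (p : ℤ_[p]) ^ n ∣ a - b := by
  rw [← sub_eq_zero, ← map_sub, ← RingHom.mem_ker, PadicInt.ker_toZModPow,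
    Ideal.mem_span_singleton]

lemma toZModPow_val_cast {p : ℕ} [Fact p.Prime] (n : ℕ) (x : ZMod (p ^ n)) :
    PadicInt.toZModPow n ((x.val : ℤ_[p])) = x := by
  haveI : NeZero (p ^ n) :=
    ⟨pow_ne_zero n (Fact.out (p := p.Prime)).ne_zero⟩
  rw [map_natCast, ZMod.natCast_zmod_val]

theorem stmt_10 (p : ℕ) [Fact p.Prime] (Φ : ℤ_[p] → ℤ_[p])
    (φ : ∀ n : ℕ, ZMod (p ^ n) → ZMod (p ^ n))
    (hφ : ∀ (n : ℕ) (x : ZMod (p ^ n)),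
      φ n x = PadicInt.toZModPow n (Φ ((x.val : ℤ_[p])))) :
    (∀ x y : ℤ_[p], x - y ∣ Φ x - Φ y) ↔
      (LipschitzWith 1 Φ ∧
       (∀ n : ℕ, ∀ x y : ZMod (p ^ n), x - y ∣ φ n x - φ n y) ∧
       (∀ (n : ℕ) (x : ℤ_[p]),
          PadicInt.toZModPow n (Φ x) = φ n (PadicInt.toZModPow n x)) ∧
       (∀ (m n : ℕ) (h : m ≤ n) (x : ZMod (p ^ n)),
          ZMod.castHom (pow_dvd_pow p h) (ZMod (p ^ m)) (φ n x)
            = φ m (ZMod.castHom (pow_dvd_pow p h) (ZMod (p ^ m)) x))) := by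
  constructor
  · intro h
    refine ⟨?_, ?_, ?_, ?_⟩
    · -- 1-Lipschitz
      apply LipschitzWith.of_dist_le_mul
      intro x y
      have := (padicInt_dvd_iff_norm_le _ _).mp (h x y)
      simpa [dist_eq_norm] using this
    · -- each φ n is congruence preserving
      intro n x y
      obtain ⟨c, hc⟩ := h ((x.val : ℤ_[p])) ((y.val : ℤ_[p]))
      refine ⟨PadicInt.toZModPow n c, ?_⟩
      rw [hφ n x, hφ n y, ← map_sub, hc, map_mul, map_sub,
        toZModPow_val_cast, toZModPow_val_cast]
    · -- inverse limit compatibility with Φ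
      intro n x
      rw [hφ n]
      rw [toZModPow_eq_iff_dvd]
      refine dvd_trans ?_ (h _ _)
      rw [← toZModPow_eq_iff_dvd]
      rw [toZModPow_val_cast]
    · -- compatibility of the φ's
      intro m n hmn x
      rw [hφ n, hφ m, ZMod.castHom_apply, PadicInt.cast_toZModPow m n hmn,
        toZModPow_eq_iff_dvd]
      refine dvd_trans ?_ (h _ _)
      rw [← toZModPow_eq_iff_dvd, toZModPow_val_cast,
        ← PadicInt.cast_toZModPow m n hmn, toZModPow_val_cast, ZMod.castHom_apply]
  · rintro ⟨hlip, -, -, -⟩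
    intro x y
    rw [padicInt_dvd_iff_norm_le, ← dist_eq_norm, ← dist_eq_norm]
    simpa using hlip.dist_le_mul x y
end

section
/- If Φ : ℤ_p → ℤ_p is congruence preserving (as a lift of congruence preserving φ_n on each ℤ/p^nℤ compatible under projections), then for all x, y ∈ ℤ_p there exists z ∈ ℤ_p with Φ(x) - Φ(y) = (x - y)·z; moreover such z can be obtained via König's Lemma from the tree of compatible witnesses u_n ∈ ℤ/p^nℤ satisfying φ_n(π_n(x)) - φ_n(π_n(y)) = (π_n(x) - π_n(y))·u_n. -/
theorem stmt_11 (p : ℕ) [Fact p.Prime] (Φ : ℤ_[p] → ℤ_[p])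
    (φ : ∀ n : ℕ, ZMod (p ^ n) → ZMod (p ^ n))
    (hcp : ∀ n : ℕ, ∀ x y : ZMod (p ^ n), x - y ∣ φ n x - φ n y)
    (hcompat : ∀ (m n : ℕ) (h : m ≤ n) (x : ZMod (p ^ n)),
        ZMod.castHom (pow_dvd_pow p h) (ZMod (p ^ m)) (φ n x)
          = φ m (ZMod.castHom (pow_dvd_pow p h) (ZMod (p ^ m)) x))
    (hlift : ∀ (n : ℕ) (x : ℤ_[p]),
        PadicInt.toZModPow n (Φ x) = φ n (PadicInt.toZModPow n x)) :
    ∀ x y : ℤ_[p], ∃ z : ℤ_[p], Φ x - Φ y = (x - y) * z ∧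
      ∀ n : ℕ,
        φ n (PadicInt.toZModPow n x) - φ n (PadicInt.toZModPow n y)
          = (PadicInt.toZModPow n x - PadicInt.toZModPow n y)
              * PadicInt.toZModPow n z := by
  intro x y
  -- First show divisibility in ℤ_[p].
  have key : ∃ z : ℤ_[p], Φ x - Φ y = (x - y) * z := by
    by_cases hd : x - y = 0
    · refine ⟨0, ?_⟩
      have hxy : x = y := sub_eq_zero.mp hd
      simp [hxy]
    · set k := (x - y).valuation with hk
      have hspec := PadicInt.unitCoeff_spec hd
      set u := PadicInt.unitCoeff hd with hu
      -- project at level k : π_k (x - y) = 0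
      have hpk : PadicInt.toZModPow k (x - y) = 0 := by
        rw [hspec, ← hk, map_mul, map_pow, map_natCast, ← Nat.cast_pow,
          ZMod.natCast_self, mul_zero]
      have hdvd : PadicInt.toZModPow k (Φ x - Φ y) = 0 := by
        have h1 : PadicInt.toZModPow k (Φ x) - PadicInt.toZModPow k (Φ y)
            = φ k (PadicInt.toZModPow k x) - φ k (PadicInt.toZModPow k y) := by
          rw [hlift, hlift]
        have h2 := hcp k (PadicInt.toZModPow k x) (PadicInt.toZModPow k y)
        rw [← h1] at h2
        have h3 : PadicInt.toZModPow k x - PadicInt.toZModPow k y = 0 := by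
          rw [← map_sub]; exact hpk
        rw [h3] at h2
        rw [map_sub]
        exact zero_dvd_iff.mp h2
      have hmem : Φ x - Φ y ∈ RingHom.ker (PadicInt.toZModPow k (p := p)) := hdvd
      rw [PadicInt.ker_toZModPow, Ideal.mem_span_singleton] at hmem
      obtain ⟨w, hw⟩ := hmem
      refine ⟨((u⁻¹ : ℤ_[p]ˣ) : ℤ_[p]) * w, ?_⟩
      rw [hw, hspec, ← hk, mul_comm ((u : ℤ_[p])) ((p : ℤ_[p]) ^ k), mul_assoc,
        ← mul_assoc ((u : ℤ_[p])) _ w, Units.mul_inv, one_mul]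
  obtain ⟨z, hz⟩ := key
  refine ⟨z, hz, fun n => ?_⟩
  have := congrArg (PadicInt.toZModPow n) hz
  rw [map_sub, map_mul, map_sub, hlift, hlift] at this
  exact this
end

section
/- Every congruence preserving function F : ℕ → ℤ extends uniquely to a congruence preserving function Φ : ℤ_p → ℤ_p. -/
open Filter

namespace Stmt12Aux

variable {p : ℕ} [Fact p.Prime]

lemma dvd_of_norm_le'' {a b : ℤ_[p]} (ha : a ≠ 0) (h : ‖b‖ ≤ ‖a‖) : a ∣ b := by
  have ha' : (a : ℚ_[p]) ≠ 0 := PadicInt.coe_ne_zero.mpr ha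
  have hc : ‖(b : ℚ_[p]) / (a : ℚ_[p])‖ ≤ 1 := by
    rw [norm_div, div_le_one (norm_pos_iff.mpr ha')]
    exact h
  refine ⟨⟨(b : ℚ_[p]) / a, hc⟩, ?_⟩
  apply Subtype.ext
  show (b : ℚ_[p]) = (a : ℚ_[p]) * ((b : ℚ_[p]) / a)
  field_simp

lemma norm_le_of_dvd'' {a b : ℤ_[p]} (h : a ∣ b) : ‖b‖ ≤ ‖a‖ := by
  obtain ⟨c, rfl⟩ := h
  rw [norm_mul]
  calc ‖a‖ * ‖c‖ ≤ ‖a‖ * 1 := by gcongr; exact PadicInt.norm_le_one c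
    _ = ‖a‖ := mul_one _

lemma norm_sub_appr (x : ℤ_[p]) (n : ℕ) : ‖x - x.appr n‖ ≤ (p : ℝ) ^ (-n : ℤ) :=
  (PadicInt.norm_le_pow_iff_mem_span_pow _ n).mpr (PadicInt.appr_spec n x)

lemma key (F : ℕ → ℤ) (hF : ∀ a b : ℕ, (a : ℤ) - b ∣ F a - F b) (a b : ℕ) (n : ℕ)
    (h : ‖((a : ℤ_[p]) - b)‖ ≤ (p : ℝ) ^ (-n : ℤ)) :
    ‖((F a - F b : ℤ) : ℤ_[p])‖ ≤ (p : ℝ) ^ (-n : ℤ) := by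
  have h' : ‖(((a : ℤ) - b : ℤ) : ℤ_[p])‖ ≤ (p : ℝ) ^ (-n : ℤ) := by push_cast; exact_mod_cast h
  rw [PadicInt.norm_int_le_pow_iff_dvd] at h' ⊢
  exact dvd_trans h' (hF a b)

end Stmt12Aux

theorem stmt_12 (p : ℕ) [Fact p.Prime] (F : ℕ → ℤ)
    (hF : ∀ a b : ℕ, (a : ℤ) - b ∣ F a - F b) :
    ∃! Φ : ℤ_[p] → ℤ_[p],
      (∀ x y : ℤ_[p], x - y ∣ Φ x - Φ y) ∧
      ∀ a : ℕ, Φ (a : ℤ_[p]) = (F a : ℤ_[p]) := by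
  have hp1 : (1 : ℝ) ≤ (p : ℝ) := by exact_mod_cast (Fact.out : p.Prime).one_lt.le
  set seq : ℤ_[p] → ℕ → ℤ_[p] := fun x n => ((F (x.appr n) : ℤ) : ℤ_[p]) with hseq
  -- main estimate
  have est : ∀ (x : ℤ_[p]) (m n : ℕ), n ≤ m →
      ‖seq x m - seq x n‖ ≤ (p : ℝ) ^ (-n : ℤ) := by
    intro x m n hnm
    have h1 : ‖x - x.appr m‖ ≤ (p : ℝ) ^ (-n : ℤ) :=
      (Stmt12Aux.norm_sub_appr x m).trans
        (zpow_le_zpow_right₀ hp1 (by exact_mod_cast neg_le_neg (Int.ofNat_le.mpr hnm)))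
    have h2 : ‖x - x.appr n‖ ≤ (p : ℝ) ^ (-n : ℤ) := Stmt12Aux.norm_sub_appr x n
    have h3 : ‖((x.appr m : ℤ_[p]) - x.appr n)‖ ≤ (p : ℝ) ^ (-n : ℤ) := by
      have : ((x.appr m : ℤ_[p]) - x.appr n) = (x - x.appr n) + (-(x - x.appr m)) := by ring
      rw [this]
      exact (PadicInt.nonarchimedean _ _).trans (max_le h2 (by rwa [norm_neg]))
    have := Stmt12Aux.key F hF (x.appr m) (x.appr n) n h3
    simpa [hseq] using this
  -- Cauchy
  have hcau : ∀ x : ℤ_[p], CauchySeq (seq x) := by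
    intro x
    rw [Metric.cauchySeq_iff]
    intro ε hε
    obtain ⟨k, hk⟩ := PadicInt.exists_pow_neg_lt p hε
    refine ⟨k, fun m hm n hn => ?_⟩
    rw [dist_eq_norm]
    rcases le_total n m with h | h
    · exact lt_of_le_of_lt ((est x m n h).trans
        (zpow_le_zpow_right₀ hp1 (by exact_mod_cast neg_le_neg (Int.ofNat_le.mpr hn)))) hk
    · rw [← norm_neg, neg_sub]
      exact lt_of_le_of_lt ((est x n m h).trans
        (zpow_le_zpow_right₀ hp1 (by exact_mod_cast neg_le_neg (Int.ofNat_le.mpr hm)))) hk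
  set Φ : ℤ_[p] → ℤ_[p] := fun x => limUnder atTop (seq x) with hΦ
  have htend : ∀ x : ℤ_[p], Tendsto (seq x) atTop (nhds (Φ x)) := fun x =>
    (hcau x).tendsto_limUnder
  -- Φ agrees with F on ℕ
  have hagree : ∀ a : ℕ, Φ (a : ℤ_[p]) = (F a : ℤ_[p]) := by
    intro a
    have h0 : Tendsto (fun n : ℕ => (p : ℝ) ^ (-(n:ℤ))) atTop (nhds 0) := by
      have := tendsto_pow_atTop_nhds_zero_of_lt_one
        (by positivity : (0:ℝ) ≤ (p : ℝ)⁻¹)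
        (inv_lt_one_of_one_lt₀ (by exact_mod_cast (Fact.out : p.Prime).one_lt))
      simpa [zpow_neg, zpow_natCast, inv_pow] using this
    have hb : ∀ n : ℕ, ‖seq (a : ℤ_[p]) n - (F a : ℤ_[p])‖ ≤ (p : ℝ) ^ (-n : ℤ) := by
      intro n
      have h3 : ‖(((a : ℤ_[p]).appr n : ℤ_[p]) - a)‖ ≤ (p : ℝ) ^ (-n : ℤ) := by
        rw [← norm_neg, neg_sub]
        exact Stmt12Aux.norm_sub_appr _ n
      have := Stmt12Aux.key F hF ((a : ℤ_[p]).appr n) a n h3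
      simpa [hseq] using this
    have : Tendsto (seq (a : ℤ_[p])) atTop (nhds ((F a : ℤ_[p]))) := by
      rw [tendsto_iff_norm_sub_tendsto_zero]
      exact squeeze_zero (fun n => norm_nonneg _) hb h0
    exact tendsto_nhds_unique (htend _) this
  -- Φ is congruence preserving
  have hcp : ∀ x y : ℤ_[p], x - y ∣ Φ x - Φ y := by
    intro x y
    rcases eq_or_ne x y with rfl | hxy
    · simp
    have hd0 : x - y ≠ 0 := sub_ne_zero.mpr hxy
    apply Stmt12Aux.dvd_of_norm_le'' hd0
    have hnpos : 0 < ‖x - y‖ := norm_pos_iff.mpr hd0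
    obtain ⟨k, hk⟩ := PadicInt.exists_pow_neg_lt p hnpos
    have hbound : ∀ n ≥ k, ‖seq x n - seq y n‖ ≤ ‖x - y‖ := by
      intro n hn
      have hpk : (p : ℝ) ^ (-n : ℤ) ≤ ‖x - y‖ :=
        ((zpow_le_zpow_right₀ hp1 (by exact_mod_cast neg_le_neg (Int.ofNat_le.mpr hn))).trans
          hk.le)
      have h1 : ‖x - x.appr n‖ ≤ ‖x - y‖ := (Stmt12Aux.norm_sub_appr x n).trans hpk
      have h2 : ‖y - y.appr n‖ ≤ ‖x - y‖ := (Stmt12Aux.norm_sub_appr y n).trans hpk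
      have h3 : ‖((x.appr n : ℤ_[p]) - y.appr n)‖ ≤ ‖x - y‖ := by
        have heq : ((x.appr n : ℤ_[p]) - y.appr n)
            = (x - y) + (-(x - x.appr n)) + (y - y.appr n) := by ring
        rw [heq]
        refine (PadicInt.nonarchimedean _ _).trans (max_le ?_ h2)
        exact (PadicInt.nonarchimedean _ _).trans (max_le le_rfl (by rwa [norm_neg]))
      have hdvd : ((x.appr n : ℤ_[p]) - y.appr n) ∣ (seq x n - seq y n) := by
        have : ((x.appr n : ℤ) - y.appr n) ∣ (F (x.appr n) - F (y.appr n)) := hF _ _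
        have h2 : (((x.appr n : ℤ) - y.appr n : ℤ) : ℤ_[p])
            ∣ ((F (x.appr n) - F (y.appr n) : ℤ) : ℤ_[p]) := by
          obtain ⟨c, hc⟩ := this
          exact ⟨(c : ℤ_[p]), by rw [← Int.cast_mul, ← hc]⟩
        simpa [hseq] using h2
      exact (Stmt12Aux.norm_le_of_dvd'' hdvd).trans h3
    have htn : Tendsto (fun n => ‖seq x n - seq y n‖) atTop (nhds ‖Φ x - Φ y‖) :=
      ((htend x).sub (htend y)).norm
    exact le_of_tendsto htn (eventually_atTop.mpr ⟨k, hbound⟩)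
  refine ⟨Φ, ⟨hcp, hagree⟩, ?_⟩
  -- uniqueness
  rintro Ψ ⟨hΨcp, hΨagree⟩
  have lip : ∀ (G : ℤ_[p] → ℤ_[p]), (∀ x y : ℤ_[p], x - y ∣ G x - G y) → Continuous G := by
    intro G hG
    refine (LipschitzWith.of_dist_le_mul (K := 1) fun x y => ?_).continuous
    rw [dist_eq_norm, dist_eq_norm, NNReal.coe_one, one_mul]
    exact Stmt12Aux.norm_le_of_dvd'' (hG x y)
  refine PadicInt.denseRange_natCast.equalizer (lip Ψ hΨcp) (lip Φ hcp) ?_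
  funext a
  simp only [Function.comp_apply, hΨagree a, hagree a]
end

section
/- The function Φ : ℤ_p → ℤ_p defined by the Mahler series Σ_{k≥1} p^{ν_p(k)-1} C(x,k), where ν_p(k) is the largest i with p^i ≤ k, is uniformly continuous but not congruence preserving. -/
open Filter PadicInt Finset Topology

instance instBSMulZpQp (p : ℕ) [Fact p.Prime] : IsBoundedSMul ℤ_[p] ℚ_[p] :=
  IsBoundedSMul.of_norm_smul_le fun r x => by
    rw [Algebra.smul_def, norm_mul]; rfl

theorem stmt_15 (p : ℕ) [Fact p.Prime] (Φ : ℤ_[p] → ℤ_[p])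
    (hΦ : ∀ x : ℤ_[p],
      Φ x = ∑' k : ℕ,
        (if 1 ≤ k then (p : ℤ_[p]) ^ (Nat.log p k - 1) else 0) * Ring.choose x k) :
    UniformContinuous Φ ∧ ¬ ∀ x y : ℤ_[p], x - y ∣ Φ x - Φ y := by
  have hp : p.Prime := Fact.out
  have hp1 : 1 < p := hp.one_lt
  set a : ℕ → ℤ_[p] := fun k => if 1 ≤ k then (p : ℤ_[p]) ^ (Nat.log p k - 1) else 0 with ha
  -- norm bound on the coefficients
  have hbound : ∀ k, ‖a k‖ ≤ ((p : ℝ)⁻¹) ^ (Nat.log p k - 1) := by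
    intro k
    by_cases hk : 1 ≤ k
    · simp only [ha, if_pos hk]
      rw [PadicInt.norm_p_pow, zpow_neg, zpow_natCast, inv_pow]
    · simp only [ha, if_neg hk, norm_zero]
      positivity
  have hlog : Tendsto (fun k => Nat.log p k - 1) atTop atTop := by
    apply Filter.tendsto_atTop_atTop.mpr
    intro m
    refine ⟨p ^ (m + 1), fun k hk => ?_⟩
    have hk0 : k ≠ 0 := by
      have : 0 < p ^ (m + 1) := by positivity
      omega
    have : m + 1 ≤ Nat.log p k := (Nat.le_log_iff_pow_le hp1 hk0).mpr hk
    omega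
  have hbt : Tendsto (fun k => ((p : ℝ)⁻¹) ^ (Nat.log p k - 1)) atTop (𝓝 0) := by
    have h0 : (0:ℝ) ≤ (p : ℝ)⁻¹ := by positivity
    have h1 : (p : ℝ)⁻¹ < 1 := by
      rw [inv_lt_one_iff₀]
      right
      exact_mod_cast hp1
    exact (tendsto_pow_atTop_nhds_zero_of_lt_one h0 h1).comp hlog
  -- summability of the series
  have hsummable : ∀ x : ℤ_[p], Summable (fun k => a k * Ring.choose x k) := by
    intro x
    apply NonarchimedeanAddGroup.summable_of_tendsto_cofinite_zero
    rw [Nat.cofinite_eq_atTop, tendsto_zero_iff_norm_tendsto_zero]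
    refine squeeze_zero (fun k => norm_nonneg _) (fun k => ?_) hbt
    calc ‖a k * Ring.choose x k‖ ≤ ‖a k‖ * ‖Ring.choose x k‖ := norm_mul_le _ _
      _ ≤ ‖a k‖ * 1 := by
          gcongr
          exact PadicInt.norm_le_one _
      _ ≤ _ := by rw [mul_one]; exact hbound k
  -- the coerced coefficients
  set a' : ℕ → ℚ_[p] := fun k => ((a k : ℚ_[p])) with ha'
  have ha'z : Tendsto a' atTop (𝓝 0) := by
    rw [tendsto_zero_iff_norm_tendsto_zero]
    refine squeeze_zero (fun k => norm_nonneg _) (fun k => ?_) hbt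
    simpa [ha'] using hbound k
  -- identify ↑(Φ x) with the Mahler series in ℚ_[p]
  have key : ∀ x : ℤ_[p], ((Φ x : ℚ_[p])) = PadicInt.mahlerSeries (p := p) a' x := by
    intro x
    have h1 : HasSum (fun k => a k * Ring.choose x k) (Φ x) := by
      rw [hΦ x]; exact (hsummable x).hasSum
    have h2 : HasSum (fun k => ((a k * Ring.choose x k : ℤ_[p]) : ℚ_[p])) ((Φ x : ℚ_[p])) :=
      h1.map (PadicInt.Coe.ringHom (p := p)).toAddMonoidHom continuous_subtype_val
    have h3 : HasSum (fun n => mahler n x • a' n) ((Φ x : ℚ_[p])) := by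
      have he : (fun n => mahler n x • a' n)
          = fun k => ((a k * Ring.choose x k : ℤ_[p]) : ℚ_[p]) := by
        funext n
        simp [mahler_apply, smul_eq_mul, Algebra.smul_def, ha', mul_comm]
      rw [he]; exact h2
    rw [PadicInt.mahlerSeries_apply ha'z x, h3.tsum_eq]
  have hcont : Continuous Φ := by
    have hc : Continuous (((↑) : ℤ_[p] → ℚ_[p]) ∘ Φ) := by
      have he : (((↑) : ℤ_[p] → ℚ_[p]) ∘ Φ) = ⇑(PadicInt.mahlerSeries (p := p) a') :=
        funext fun x => key x
      rw [he]
      exact (PadicInt.mahlerSeries (p := p) a').continuous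
    exact continuous_induced_rng.mpr hc
  refine ⟨CompactSpace.uniformContinuous_of_continuous hcont, ?_⟩
  -- not congruence preserving
  intro hcp
  have h0 : Φ 0 = 0 := by
    rw [hΦ]
    convert tsum_zero with k
    rcases k with _ | k
    · simp
    · rw [show ((0 : ℤ_[p])) = ((0 : ℕ) : ℤ_[p]) by simp, Ring.choose_natCast]
      simp
  have hP : Φ ((p : ℕ) : ℤ_[p]) = ∑ i ∈ Finset.range p, ((p.choose (i + 1) : ℤ_[p])) := by
    rw [hΦ]
    rw [tsum_eq_sum (s := Finset.range (p + 1)) (by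
      intro k hk
      simp only [Finset.mem_range, not_lt] at hk
      rw [Ring.choose_natCast, Nat.choose_eq_zero_of_lt (by omega), Nat.cast_zero, mul_zero])]
    rw [Finset.sum_range_succ']
    have hz : (if 1 ≤ (0:ℕ) then (p : ℤ_[p]) ^ (Nat.log p 0 - 1) else 0)
        * Ring.choose ((p : ℕ) : ℤ_[p]) 0 = 0 := by norm_num
    rw [hz, add_zero]
    refine Finset.sum_congr rfl fun i hi => ?_
    simp only [Finset.mem_range] at hi
    have hip : i + 1 < p ^ 2 := by nlinarith
    have hlog1 : Nat.log p (i + 1) < 2 := (Nat.log_lt_iff_lt_pow hp1 (by omega)).mpr hip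
    rw [if_pos (by omega), show Nat.log p (i + 1) - 1 = 0 by omega, pow_zero, one_mul,
      Ring.choose_natCast]
  -- evaluate the sum as 2^p - 1
  have hN : Φ ((p : ℕ) : ℤ_[p]) = ((2 ^ p - 1 : ℕ) : ℤ_[p]) := by
    have h2 := Nat.sum_range_choose p
    rw [Finset.sum_range_succ' (fun i => p.choose i) p] at h2
    simp only [Nat.choose_zero_right] at h2
    have hnat : ∑ i ∈ Finset.range p, p.choose (i + 1) = 2 ^ p - 1 := by omega
    rw [hP, ← Nat.cast_sum, hnat]
  -- derive divisibility and contradiction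
  have hdvd : ((p : ℕ) : ℤ_[p]) ∣ Φ ((p : ℕ) : ℤ_[p]) := by
    have := hcp ((p : ℕ) : ℤ_[p]) 0
    rwa [sub_zero, h0, sub_zero] at this
  have hlt : ‖Φ ((p : ℕ) : ℤ_[p])‖ < 1 := (PadicInt.norm_lt_one_iff_dvd _).mpr hdvd
  rw [hN] at hlt
  have hlt' : ‖(((2 ^ p - 1 : ℕ) : ℤ) : ℤ_[p])‖ < 1 := by
    rwa [Int.cast_natCast]
  rw [PadicInt.norm_int_lt_one_iff_dvd] at hlt'
  have hdvdN : p ∣ 2 ^ p - 1 := by exact_mod_cast hlt'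
  have hzm : ((2 ^ p - 1 : ℕ) : ZMod p) = 0 := by
    exact_mod_cast (ZMod.natCast_eq_zero_iff _ _).mpr hdvdN
  have h2p : (1:ℕ) ≤ 2 ^ p := Nat.one_le_two_pow
  rw [Nat.cast_sub h2p] at hzm
  push_cast at hzm
  rw [ZMod.pow_card] at hzm
  rw [show (2 : ZMod p) - 1 = 1 by ring] at hzm
  exact one_ne_zero hzm
end

section
/- Let f : ℤ → ℤ be a nondecreasing congruence preserving function. Then for any set L ⊆ ℤ, f⁻¹(L) = ⋃_{a ∈ f⁻¹(L)} ⋂_{t ∈ L - a} (L - t), where L - t = {x - t : x ∈ L}. -/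
theorem stmt_16 (f : ℤ → ℤ) (hmono : Monotone f)
    (hf : ∀ x y : ℤ, x - y ∣ f x - f y) (L : Set ℤ) :
    f ⁻¹' L = ⋃ a ∈ f ⁻¹' L, ⋂ t ∈ {t : ℤ | t + a ∈ L}, {x : ℤ | x + t ∈ L} := by
  ext x
  simp only [Set.mem_preimage, Set.mem_iUnion, Set.mem_iInter, Set.mem_setOf_eq]
  constructor
  · intro hx
    exact ⟨x, hx, fun t ht => by rwa [add_comm]⟩
  · rintro ⟨a, ha, h⟩
    rcases eq_or_ne x a with rfl | hne
    · exact ha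
    have H : ∀ ℓ ∈ L, ℓ + (x - a) ∈ L := by
      intro ℓ hℓ
      have heq : x + (ℓ - a) = ℓ + (x - a) := by ring
      rw [← heq]
      exact h (ℓ - a) (by simpa using hℓ)
    obtain ⟨c, hc⟩ := hf x a
    have hc0 : 0 ≤ c := by
      rcases lt_or_gt_of_ne hne with hlt | hgt
      · have h1 : f x ≤ f a := hmono hlt.le
        have h2 : x - a < 0 := by omega
        nlinarith
      · have h1 : f a ≤ f x := hmono hgt.le
        have h2 : 0 < x - a := by omega
        nlinarith
    have key : ∀ n : ℕ, f a + (x - a) * n ∈ L := by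
      intro n
      induction n with
      | zero => simpa using ha
      | succ k ih =>
          have := H _ ih
          have heq : f a + (x - a) * (k + 1 : ℕ) = f a + (x - a) * k + (x - a) := by
            push_cast; ring
          rw [heq]
          exact this
    have hk := key c.toNat
    rw [Int.toNat_of_nonneg hc0] at hk
    have hfx : f x = f a + (x - a) * c := by linarith
    rwa [hfx]
end

section
/- Let f : ℤ → ℤ be a nondecreasing function. Then f is congruence preserving with f(a) ≥ a for all a ∈ ℤ if and only if for every finite subset L of ℤ, the smallest lattice of subsets of ℤ containing L and closed under decrement (L ↦ L - 1) is closed under f⁻¹. -/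
/-- A family of subsets of `ℤ` closed under binary unions, binary intersections,
and decrement `A ↦ A - 1 = {x | x + 1 ∈ A}`. -/
def IsDecLattice (C : Set (Set ℤ)) : Prop :=
  (∀ A ∈ C, ∀ B ∈ C, A ∪ B ∈ C) ∧ (∀ A ∈ C, ∀ B ∈ C, A ∩ B ∈ C) ∧
  (∀ A ∈ C, {x : ℤ | x + 1 ∈ A} ∈ C)

/-- The smallest lattice of subsets of `ℤ` containing `L` and closed under decrement. -/
def genLattice (L : Set ℤ) : Set (Set ℤ) :=
  {S | ∀ C : Set (Set ℤ), IsDecLattice C → L ∈ C → S ∈ C}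


lemma gen_self (L : Set ℤ) : L ∈ genLattice L := fun _ _ hL => hL

lemma gen_union {L A B : Set ℤ} (hA : A ∈ genLattice L) (hB : B ∈ genLattice L) :
    A ∪ B ∈ genLattice L := fun C hC hL => hC.1 A (hA C hC hL) B (hB C hC hL)

lemma gen_inter {L A B : Set ℤ} (hA : A ∈ genLattice L) (hB : B ∈ genLattice L) :
    A ∩ B ∈ genLattice L := fun C hC hL => hC.2.1 A (hA C hC hL) B (hB C hC hL)

lemma gen_dec {L A : Set ℤ} (hA : A ∈ genLattice L) :
    {x : ℤ | x + 1 ∈ A} ∈ genLattice L := fun C hC hL => hC.2.2 A (hA C hC hL)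

lemma gen_shift (L : Set ℤ) (i : ℕ) : {x : ℤ | x + (i : ℤ) ∈ L} ∈ genLattice L := by
  induction i with
  | zero => simpa using gen_self L
  | succ n ih =>
      have h := gen_dec ih
      have : {x : ℤ | x + 1 ∈ {y : ℤ | y + (n : ℤ) ∈ L}} = {x : ℤ | x + ((n : ℤ) + 1) ∈ L} := by
        ext x
        simp only [Set.mem_setOf_eq]
        have : x + 1 + (n : ℤ) = x + ((n : ℤ) + 1) := by ring
        rw [this]
      rw [this] at h
      simpa [add_comm] using h

lemma gen_biUnion {L : Set ℤ} {α : Type*} (A : α → Set ℤ) (F : Finset α) (hF : F.Nonempty)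
    (h : ∀ a ∈ F, A a ∈ genLattice L) : (⋃ a ∈ F, A a) ∈ genLattice L := by
  classical
  induction F using Finset.induction_on with
  | empty => exact absurd hF (by simp)
  | @insert a s hx ih =>

      rcases s.eq_empty_or_nonempty with rfl | hs
      · simpa using h a (by simp)
      · rw [Finset.set_biUnion_insert]
        exact gen_union (h a (by simp)) (ih hs fun b hb => h b (by simp [hb]))

lemma gen_biInter {L : Set ℤ} {α : Type*} (A : α → Set ℤ) (F : Finset α) (hF : F.Nonempty)
    (h : ∀ a ∈ F, A a ∈ genLattice L) : (⋂ a ∈ F, A a) ∈ genLattice L := by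
  classical
  induction F using Finset.induction_on with
  | empty => exact absurd hF (by simp)
  | @insert a s hx ih =>

      rcases s.eq_empty_or_nonempty with rfl | hs
      · simpa using h a (by simp)
      · rw [Finset.set_biInter_insert]
        exact gen_inter (h a (by simp)) (ih hs fun b hb => h b (by simp [hb]))

lemma preimage_core {L : Set ℤ} (hL : L.Finite) (g : ℤ → ℤ) (hg : Monotone g)
    (hcp : ∀ x y : ℤ, x - y ∣ g x - g y) (hge : ∀ a : ℤ, a ≤ g a) :
    g ⁻¹' L ∈ genLattice L := by
  classical
  rcases L.eq_empty_or_nonempty with rfl | hne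
  · simpa using gen_self (∅ : Set ℤ)
  have hLf : hL.toFinset.Nonempty := by simpa [Set.Finite.toFinset] using hne
  set M : ℤ := hL.toFinset.max' hLf with hM
  set m : ℤ := hL.toFinset.min' hLf with hm
  have hmM : m ≤ M := hL.toFinset.min'_le _ (hL.toFinset.max'_mem hLf)
  have hleM : ∀ z ∈ L, z ≤ M := fun z hz => hL.toFinset.le_max' z (hL.mem_toFinset.mpr hz)
  have hgem : ∀ z ∈ L, m ≤ z := fun z hz => hL.toFinset.min'_le z (hL.mem_toFinset.mpr hz)
  -- the empty set is in the lattice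
  have hempty : (∅ : Set ℤ) ∈ genLattice L := by
    have h1 := gen_inter (gen_self L) (gen_shift L (M - m + 1).toNat)
    have h2 : L ∩ {x : ℤ | x + ((M - m + 1).toNat : ℤ) ∈ L} = ∅ := by
      ext z
      simp only [Set.mem_inter_iff, Set.mem_setOf_eq, Set.mem_empty_iff_false, iff_false,
        not_and]
      intro hz hz2
      have h3 := hleM _ hz2
      have h4 := hgem _ hz
      have h5 : ((M - m + 1).toNat : ℤ) = M - m + 1 := Int.toNat_of_nonneg (by omega)
      omega
    rwa [h2] at h1
  -- finiteness of the preimage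
  have hfin : (g ⁻¹' L).Finite := by
    apply Set.Finite.subset (hL.biUnion (fun b (_ : b ∈ L) => Set.finite_Icc (b + 1 - (g (b+1) - b)) b))
    intro x hx
    have hb : g x ∈ L := hx
    simp only [Set.mem_iUnion, Set.mem_Icc]
    refine ⟨g x, hb, ?_, hge x⟩
    obtain ⟨t, ht⟩ := hcp (g x + 1) x
    have h1 : g x + 1 ≤ g (g x + 1) := hge _
    have h2 : 0 < g (g x + 1) - g x := by omega
    have h3 : g x + 1 - x ≤ g (g x + 1) - g x := Int.le_of_dvd h2 (hcp (g x + 1) x)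
    omega
  set F : Finset ℤ := hfin.toFinset with hF
  rcases F.eq_empty_or_nonempty with hFe | hFne
  · have : g ⁻¹' L = ∅ := by
      rw [← Set.Finite.coe_toFinset hfin, ← hF, hFe]; simp
    rw [this]; exact hempty
  -- the blocks
  set T : ℤ → Set ℤ := fun x => ⋂ c ∈ hL.toFinset.filter (fun c => x ≤ c), {z : ℤ | z + (c - x) ∈ L} with hT
  have hTmem : ∀ x ∈ g ⁻¹' L, T x ∈ genLattice L := by
    intro x hx
    apply gen_biInter _ _ ⟨g x, by simp [Finset.mem_filter, hL.mem_toFinset]; exact ⟨hx, hge x⟩⟩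
    intro c hc
    simp only [Finset.mem_filter, hL.mem_toFinset] at hc
    have h5 : ((c - x).toNat : ℤ) = c - x := Int.toNat_of_nonneg (by omega)
    have := gen_shift L (c - x).toNat
    rwa [h5] at this
  have hTself : ∀ x ∈ g ⁻¹' L, x ∈ T x := by
    intro x hx
    simp only [hT, Set.mem_iInter, Finset.mem_filter, hL.mem_toFinset, Set.mem_setOf_eq]
    rintro c ⟨hc, hxc⟩
    simpa using hc
  have hTsub : ∀ x ∈ g ⁻¹' L, T x ⊆ g ⁻¹' L := by
    intro x hx y hy
    simp only [hT, Set.mem_iInter, Finset.mem_filter, hL.mem_toFinset, Set.mem_setOf_eq] at hy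
    have hyT : ∀ c ∈ L, x ≤ c → y + (c - x) ∈ L := fun c hc hxc => hy c ⟨hc, hxc⟩
    have hbL : g x ∈ L := hx
    have hxb : x ≤ g x := hge x
    rcases lt_trichotomy y x with hlt | rfl | hgt
    · -- y < x
      have hgyx : g y ≤ g x := hg hlt.le
      obtain ⟨t, ht⟩ := hcp x y
      have hd : 0 < x - y := by omega
      have ht0 : 0 ≤ t := by nlinarith
      have key : ∀ j : ℕ, (j : ℤ) ≤ t → g x - (j : ℤ) * (x - y) ∈ L := by
        intro j
        induction j with
        | zero => intro _; simpa using hbL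
        | succ n ih =>
          intro hle
          have h1 : (n : ℤ) ≤ t := by push_cast at hle; omega
          have hc : g x - (n : ℤ) * (x - y) ∈ L := ih h1
          have hprod : ((n : ℤ) + 1) * (x - y) ≤ t * (x - y) := by
            apply mul_le_mul_of_nonneg_right _ hd.le
            push_cast at hle; omega
          have hcx : x ≤ g x - (n : ℤ) * (x - y) := by
            have hgy : y ≤ g y := hge y
            nlinarith
          have h6 := hyT _ hc hcx
          have h7 : y + (g x - (n : ℤ) * (x - y) - x) = g x - ((n : ℤ) + 1) * (x - y) := by ring
          rw [h7] at h6
          have h8 : ((n + 1 : ℕ) : ℤ) = (n : ℤ) + 1 := by push_cast; ring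
          rwa [h8]
      have h9 := key t.toNat (by rw [Int.toNat_of_nonneg ht0])
      rw [Int.toNat_of_nonneg ht0] at h9
      have h10 : g x - t * (x - y) = g y := by linarith [ht]
      rwa [h10] at h9
    · exact hx
    · -- x < y : contradiction with finiteness
      exfalso
      have chain : ∀ j : ℕ, g x + (j : ℤ) * (y - x) ∈ L := by
        intro j
        induction j with
        | zero => simpa using hbL
        | succ n ih =>
          have hcx : x ≤ g x + (n : ℤ) * (y - x) := by nlinarith [hxb]
          have h6 := hyT _ ih hcx
          have h7 : y + (g x + (n : ℤ) * (y - x) - x) = g x + ((n : ℤ) + 1) * (y - x) := by ring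
          rw [h7] at h6
          have h8 : ((n + 1 : ℕ) : ℤ) = (n : ℤ) + 1 := by push_cast; ring
          rwa [h8]
      set n : ℕ := (M - g x).toNat + 1 with hn
      have h1 := chain n
      have h2 := hleM _ h1
      have h3 : ((M - g x).toNat : ℤ) ≥ M - g x := Int.self_le_toNat _
      have h4 : (n : ℤ) * (y - x) ≥ (n : ℤ) * 1 := by
        apply mul_le_mul_of_nonneg_left (by omega) (by positivity)
      have h5 : ((n : ℕ) : ℤ) = ((M - g x).toNat : ℤ) + 1 := by rw [hn]; push_cast; ring
      omega
  have hU : g ⁻¹' L = ⋃ x ∈ F, T x := by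
    ext z
    simp only [Set.mem_iUnion, exists_prop]
    constructor
    · intro hz
      exact ⟨z, by rwa [hF, Set.Finite.mem_toFinset], hTself z hz⟩
    · rintro ⟨x, hxF, hzT⟩
      exact hTsub x (by rwa [hF, Set.Finite.mem_toFinset] at hxF) hzT
  rw [hU]
  exact gen_biUnion T F hFne fun x hxF => hTmem x (by rwa [hF, Set.Finite.mem_toFinset] at hxF)

theorem stmt_17 (f : ℤ → ℤ) (hmono : Monotone f) :
    ((∀ x y : ℤ, x - y ∣ f x - f y) ∧ ∀ a : ℤ, a ≤ f a) ↔
    ∀ L : Set ℤ, L.Finite → ∀ S ∈ genLattice L, f ⁻¹' S ∈ genLattice L := by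
  constructor
  · rintro ⟨hcp, hge⟩ L hLfin S hS
    set C : Set (Set ℤ) := {S | ∀ g : ℤ → ℤ, Monotone g → (∀ x y : ℤ, x - y ∣ g x - g y) →
      (∀ a : ℤ, a ≤ g a) → g ⁻¹' S ∈ genLattice L} with hCdef
    have hC : IsDecLattice C := by
      refine ⟨?_, ?_, ?_⟩
      · intro A hA B hB g h1 h2 h3
        rw [Set.preimage_union]
        exact gen_union (hA g h1 h2 h3) (hB g h1 h2 h3)
      · intro A hA B hB g h1 h2 h3
        rw [Set.preimage_inter]
        exact gen_inter (hA g h1 h2 h3) (hB g h1 h2 h3)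
      · intro A hA g h1 h2 h3
        have h4 : Monotone (fun z => g z + 1) := fun a b hab => by
          simpa using h1 hab
        have h5 : ∀ x y : ℤ, x - y ∣ (fun z => g z + 1) x - (fun z => g z + 1) y := by
          intro x y; simpa using h2 x y
        have h6 : ∀ a : ℤ, a ≤ (fun z => g z + 1) a := fun a => by
          have := h3 a; simp; omega
        have h7 := hA (fun z => g z + 1) h4 h5 h6
        have h8 : g ⁻¹' {x : ℤ | x + 1 ∈ A} = (fun z => g z + 1) ⁻¹' A := rfl
        rwa [h8]
    have hLC : L ∈ C := fun g h1 h2 h3 => preimage_core hLfin g h1 h2 h3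
    exact hS C hC hLC f hmono hcp hge
  · intro H
    have hge : ∀ a : ℤ, a ≤ f a := by
      intro a
      have h1 : f ⁻¹' {f a} ∈ genLattice {f a} :=
        H {f a} (Set.finite_singleton _) {f a} (gen_self _)
      have h2 : f ⁻¹' {f a} ⊆ Set.Iic (f a) := by
        apply h1 {S : Set ℤ | S ⊆ Set.Iic (f a)}
        · refine ⟨?_, ?_, ?_⟩
          · intro A hA B hB; exact Set.union_subset hA hB
          · intro A hA B hB; exact (Set.inter_subset_left).trans hA
          · intro A hA z hz
            have := hA hz
            simp only [Set.mem_Iic] at this ⊢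
            omega
        · intro z hz; simp_all
      exact h2 rfl
    refine ⟨?_, hge⟩
    have main : ∀ x y : ℤ, y < x → x - y ∣ f x - f y := by
      intro x y hlt
      set d : ℤ := x - y with hd
      have hd0 : 0 < d := by omega
      set b : ℤ := f x with hb
      set N : ℕ := (b - x).toNat + 1 with hN
      set L : Set ℤ := (fun j : ℕ => b - (j : ℤ) * d) '' {j : ℕ | j ≤ N} with hL
      have hLfin : L.Finite := (Set.finite_Iic N).image _
      have h1 : f ⁻¹' L ∈ genLattice L := H L hLfin L (gen_self L)
      have h2 : f ⁻¹' L ∈ {S : Set ℤ | ∀ z ∈ S, b - (N : ℤ) * d < z → z - d ∈ S} := by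
        apply h1
        · refine ⟨?_, ?_, ?_⟩
          · rintro A hA B hB z (hz | hz) hgt
            · exact Or.inl (hA z hz hgt)
            · exact Or.inr (hB z hz hgt)
          · rintro A hA B hB z ⟨hz1, hz2⟩ hgt
            exact ⟨hA z hz1 hgt, hB z hz2 hgt⟩
          · intro A hA z hz hgt
            have h3 : z + 1 - d ∈ A := hA (z + 1) hz (by omega)
            have h4 : z - d + 1 = z + 1 - d := by ring
            simp only [Set.mem_setOf_eq, h4]
            exact h3
        · rintro z ⟨j, hj, hz⟩ hgt
          simp only [Set.mem_setOf_eq] at hj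
          have hz' : z = b - (j : ℤ) * d := by rw [← hz]
          subst hz'
          have hjd : (j : ℤ) * d < (N : ℤ) * d := by omega
          have hjN : (j : ℤ) < (N : ℤ) := lt_of_mul_lt_mul_right hjd hd0.le
          refine ⟨j + 1, ?_, ?_⟩
          · simp only [Set.mem_setOf_eq]
            exact_mod_cast hjN
          · push_cast
            ring
      have hx : x ∈ f ⁻¹' L := ⟨0, by simp, by simp [hb]⟩
      have hxgt : b - (N : ℤ) * d < x := by
        have h5 : ((b - x).toNat : ℤ) ≥ b - x := Int.self_le_toNat _
        have h6 : (N : ℤ) * d ≥ (N : ℤ) * 1 := by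
          apply mul_le_mul_of_nonneg_left (by omega) (by positivity)
        have h7 : (N : ℤ) = ((b - x).toNat : ℤ) + 1 := by rw [hN]; push_cast; ring
        omega
      have h8 : x - d ∈ f ⁻¹' L := h2 x hx hxgt
      have h9 : x - d = y := by omega
      rw [h9] at h8
      obtain ⟨j, _, hj2⟩ := h8
      refine ⟨(j : ℤ), by rw [← hj2]; push_cast; ring⟩
    intro x y
    rcases lt_trichotomy y x with h | rfl | h
    · exact main x y h
    · simp
    · have h1 := main y x h
      rw [show x - y = -(y - x) by ring, show f x - f y = -(f y - f x) by ring]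
      exact neg_dvd.mpr (dvd_neg.mpr h1)
end

section
/- If f : ℤ → ℤ is a nondecreasing congruence preserving function with f(a) ≥ a for all a, and L = F + dℤ is a recognizable subset of ℤ (d ≥ 1, F ⊆ {0,...,d-1}), then f⁻¹(L) is a finite union of finite intersections of sets of the form L - t with t ∈ ℤ. -/
theorem stmt_18 (f : ℤ → ℤ) (hmono : Monotone f)
    (hcp : ∀ x y : ℤ, x - y ∣ f x - f y) (hge : ∀ a : ℤ, a ≤ f a)
    (d : ℕ) (hd : 1 ≤ d) (F : Finset ℤ) (hF : ∀ r ∈ F, 0 ≤ r ∧ r < d)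
    (L : Set ℤ) (hL : L = {x : ℤ | ∃ r ∈ F, ∃ q : ℤ, x = r + d * q}) :
    ∃ J : Finset (Finset ℤ), (∀ I ∈ J, I.Nonempty) ∧
      f ⁻¹' L = ⋃ I ∈ J, ⋂ t ∈ I, {x : ℤ | x + t ∈ L} := by
  classical
  have hd0 : (0:ℤ) < (d:ℤ) := by exact_mod_cast hd
  -- a - a % d is divisible by d
  have key : ∀ a : ℤ, (d:ℤ) ∣ a - a % d := fun a =>
    ⟨a / d, by have := Int.mul_ediv_add_emod a d; linarith⟩
  -- membership in L depends only on residue mod d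
  have hmod : ∀ a b : ℤ, (d:ℤ) ∣ a - b → a ∈ L → b ∈ L := by
    rintro a b ⟨m, hm⟩ ha
    rw [hL] at ha ⊢
    obtain ⟨r, hr, q, hq⟩ := ha
    exact ⟨r, hr, q - m, by push_cast; linarith⟩
  -- counting: if L + e ⊆ L then L - e ⊆ L
  have step : ∀ e : ℤ, (∀ a ∈ L, a + e ∈ L) → ∀ b ∈ L, b - e ∈ L := by
    intro e he b hb
    set S : Finset ℤ := (Finset.Ico (0:ℤ) (d:ℤ)).filter (· ∈ L) with hS
    have hinj : Set.InjOn (fun c => (c + e) % d) S := by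
      intro c1 h1 c2 h2 h
      simp only [hS, Finset.coe_filter, Set.mem_setOf_eq, Finset.mem_Ico] at h1 h2
      simp only at h
      have d1 := key (c1 + e)
      have d2 := key (c2 + e)
      have hdvd : (d:ℤ) ∣ c1 - c2 := by
        have heq : c1 - c2 = (c1 + e - (c1 + e) % d) - (c2 + e - (c2 + e) % d) + ((c1+e)%d - (c2+e)%d) := by ring
        have hz : (c1+e)%(d:ℤ) - (c2+e)%(d:ℤ) = 0 := by rw [h]; ring
        rw [heq, hz, add_zero]
        exact dvd_sub d1 d2
      obtain ⟨m, hm⟩ := hdvd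
      have h1' := h1.1; have h2' := h2.1
      have hm1 : m = 0 := by nlinarith [h1'.1, h1'.2, h2'.1, h2'.2]
      rw [hm1, mul_zero] at hm
      omega
    have hmaps : ∀ c ∈ S, (c + e) % d ∈ S := by
      intro c hc
      simp only [hS, Finset.mem_filter, Finset.mem_Ico] at hc ⊢
      refine ⟨⟨Int.emod_nonneg _ hd0.ne', Int.emod_lt_of_pos _ hd0⟩, ?_⟩
      exact hmod _ _ (key (c + e)) (he c hc.2)
    have himg : S.image (fun c => (c + e) % d) = S := by
      apply Finset.eq_of_subset_of_card_le
      · intro y hy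
        obtain ⟨c, hc, rfl⟩ := Finset.mem_image.1 hy
        exact hmaps c hc
      · rw [Finset.card_image_of_injOn hinj]
    -- b % d ∈ S, pull back through the shift
    have hbS : b % d ∈ S := by
      simp only [hS, Finset.mem_filter, Finset.mem_Ico]
      exact ⟨⟨Int.emod_nonneg _ hd0.ne', Int.emod_lt_of_pos _ hd0⟩, hmod _ _ (key b) hb⟩
    rw [← himg] at hbS
    obtain ⟨c', hc'S, hc'⟩ := Finset.mem_image.1 hbS
    simp only [hS, Finset.mem_filter, Finset.mem_Ico] at hc'S
    -- b - e ≡ c' mod d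
    refine hmod c' (b - e) ?_ hc'S.2
    have d1 := key (c' + e)
    have d2 := key b
    have heq : c' - (b - e) = (c' + e - (c'+e) % d) - (b - b % d) + ((c'+e)%d - b%d) := by ring
    have hz : (c'+e)%(d:ℤ) - b%(d:ℤ) = 0 := by rw [hc']; ring
    rw [heq, hz, add_zero]
    exact dvd_sub d1 d2
  -- iterate: L + k*e ⊆ L for all k : ℤ
  have multi : ∀ e : ℤ, (∀ a ∈ L, a + e ∈ L) → ∀ k : ℤ, ∀ a ∈ L, a + k * e ∈ L := by
    intro e he k
    induction k using Int.induction_on with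
    | zero => simpa using fun a ha => ha
    | succ n ih =>
      intro a ha
      have h1 := he _ (ih a ha)
      have : a + ((n:ℤ) + 1) * e = a + (n:ℤ) * e + e := by ring
      rwa [this]
    | pred n ih =>
      intro a ha
      have h1 := step e he _ (ih a ha)
      have : a + (-(n:ℤ) - 1) * e = a + (-(n:ℤ)) * e - e := by ring
      rwa [this]
  -- the construction
  set Is : ℤ → Finset ℤ := fun s => (Finset.Ico (0:ℤ) (d:ℤ)).filter (fun t => s + t ∈ L)
    with hIs
  refine ⟨((Finset.Ico (0:ℤ) (d:ℤ)).filter (fun s => f s ∈ L)).image Is, ?_, ?_⟩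
  · -- each I is nonempty
    intro I hI
    obtain ⟨s, hs, rfl⟩ := Finset.mem_image.1 hI
    simp only [Finset.mem_filter, Finset.mem_Ico] at hs
    have hfs := hs.2
    rw [hL] at hfs
    obtain ⟨r, hrF, q, hq⟩ := hfs
    refine ⟨(r - s) % d, ?_⟩
    simp only [hIs, Finset.mem_filter, Finset.mem_Ico]
    refine ⟨⟨Int.emod_nonneg _ hd0.ne', Int.emod_lt_of_pos _ hd0⟩, ?_⟩
    have hrL : r ∈ L := by rw [hL]; exact ⟨r, hrF, 0, by ring⟩
    refine hmod r (s + (r - s) % d) ?_ hrL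
    have d1 := key (r - s)
    have : r - (s + (r - s) % d) = (r - s) - (r - s) % d := by ring
    rw [this]; exact d1
  · -- the set equality
    ext x
    simp only [Set.mem_preimage, Set.mem_iUnion, Set.mem_iInter, Set.mem_setOf_eq,
      Finset.mem_image, Finset.mem_filter, Finset.mem_Ico, exists_prop]
    constructor
    · intro hx
      refine ⟨Is (x % d), ⟨x % d, ⟨⟨Int.emod_nonneg _ hd0.ne', Int.emod_lt_of_pos _ hd0⟩, ?_⟩, rfl⟩, ?_⟩
      · -- f (x % d) ∈ L
        have hdvd : (d:ℤ) ∣ x - x % d := key x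
        have hcpd : (x - x % d) ∣ f x - f (x % d) := hcp x (x % d)
        exact hmod (f x) (f (x % d)) (dvd_trans hdvd hcpd) hx
      · intro t ht
        simp only [hIs, Finset.mem_filter, Finset.mem_Ico] at ht
        refine hmod (x % d + t) (x + t) ?_ ht.2
        have := key x
        have h2 : x % d + t - (x + t) = -(x - x % d) := by ring
        rw [h2]; exact dvd_neg.2 this
    · rintro ⟨I, ⟨s, ⟨hs, hfs⟩, rfl⟩, hx⟩
      -- extend to all t
      have hall : ∀ t : ℤ, s + t ∈ L → x + t ∈ L := by
        intro t ht
        have htmod : s + t % d ∈ L := by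
          refine hmod (s + t) (s + t % d) ?_ ht
          have := key t
          have h2 : s + t - (s + t % d) = t - t % d := by ring
          rw [h2]; exact this
        have hmem : t % d ∈ Is s := by
          simp only [hIs, Finset.mem_filter, Finset.mem_Ico]
          exact ⟨⟨Int.emod_nonneg _ hd0.ne', Int.emod_lt_of_pos _ hd0⟩, htmod⟩
        have hx' := hx _ hmem
        refine hmod (x + t % d) (x + t) ?_ hx'
        have := key t
        have h2 : x + t % d - (x + t) = -(t - t % d) := by ring
        rw [h2]; exact dvd_neg.2 this
      have he : ∀ a ∈ L, a + (x - s) ∈ L := by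
        intro a ha
        have h1 : s + (a - s) ∈ L := by
          have : s + (a - s) = a := by ring
          rwa [this]
        have h2 := hall (a - s) h1
        have : x + (a - s) = a + (x - s) := by ring
        rwa [this] at h2
      obtain ⟨k, hk⟩ := hcp x s
      have hfin := multi (x - s) he k (f s) hfs
      have : f s + k * (x - s) = f x := by linarith [hk]
      rwa [this] at hfin
end

section
/- Let L = 6 + 10ℕ ⊆ ℤ and f(x) = x². Then f is congruence preserving, but f⁻¹(L) = ({4,6} + 10ℕ) ∪ (−({4,6} + 10ℕ)) is not a finite union of finite intersections of sets L - t (t ∈ ℤ), since f⁻¹(L) contains infinitely many negative integers while each L - t contains only finitely many. -/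
theorem stmt_19 (f : ℤ → ℤ) (hf : f = fun x => x ^ 2)
    (L : Set ℤ) (hL : L = {x : ℤ | ∃ n : ℕ, x = 6 + 10 * (n : ℤ)}) :
    (∀ x y : ℤ, x - y ∣ f x - f y) ∧
    f ⁻¹' L = ({x : ℤ | ∃ n : ℕ, x = 4 + 10 * (n : ℤ)} ∪
               {x : ℤ | ∃ n : ℕ, x = 6 + 10 * (n : ℤ)}) ∪
              ({x : ℤ | ∃ n : ℕ, x = -(4 + 10 * (n : ℤ))} ∪
               {x : ℤ | ∃ n : ℕ, x = -(6 + 10 * (n : ℤ))}) ∧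
    ¬ ∃ J : Finset (Finset ℤ), (∀ I ∈ J, I.Nonempty) ∧
        f ⁻¹' L = ⋃ I ∈ J, ⋂ t ∈ I, {x : ℤ | x + t ∈ L} := by
  subst hf hL
  refine ⟨fun x y => ⟨x + y, by ring⟩, ?_, ?_⟩
  · ext x
    simp only [Set.mem_preimage, Set.mem_setOf_eq, Set.mem_union]
    constructor
    · rintro ⟨n, hn⟩
      have hq := Int.mul_ediv_add_emod x 10
      set q := x / 10 with hqdef
      set r := x % 10 with hrdef
      have hr0 : 0 ≤ r := Int.emod_nonneg x (by norm_num)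
      have hr10 : r < 10 := Int.emod_lt_of_pos x (by norm_num)
      have hx : x = 10 * q + r := hq.symm
      have key : ∃ k : ℤ, r ^ 2 = 6 + 10 * k := by
        refine ⟨(n : ℤ) - 10 * q ^ 2 - 2 * q * r, ?_⟩
        have h2 : (10 * q + r) ^ 2 = 6 + 10 * n := by rw [← hx]; exact hn
        linear_combination h2
      obtain ⟨k, hk⟩ := key
      interval_cases r
      · omega
      · omega
      · omega
      · omega
      · -- r = 4
        rcases le_or_gt 0 q with h | h
        · exact Or.inl (Or.inl ⟨q.toNat, by omega⟩)
        · exact Or.inr (Or.inr ⟨(-q - 1).toNat, by omega⟩)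
      · omega
      · -- r = 6
        rcases le_or_gt 0 q with h | h
        · exact Or.inl (Or.inr ⟨q.toNat, by omega⟩)
        · exact Or.inr (Or.inl ⟨(-q - 1).toNat, by omega⟩)
      · omega
      · omega
      · omega
    · rintro ((⟨n, hn⟩ | ⟨n, hn⟩) | (⟨n, hn⟩ | ⟨n, hn⟩)) <;> subst hn
      · exact ⟨1 + 8 * n + 10 * n ^ 2, by push_cast; ring⟩
      · exact ⟨3 + 12 * n + 10 * n ^ 2, by push_cast; ring⟩
      · exact ⟨1 + 8 * n + 10 * n ^ 2, by push_cast; ring⟩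
      · exact ⟨3 + 12 * n + 10 * n ^ 2, by push_cast; ring⟩
  · rintro ⟨J, hJne, hJ⟩
    rcases eq_or_ne J ∅ with rfl | hJ0
    · simp only [Finset.notMem_empty, Set.iUnion_of_empty, Set.iUnion_empty] at hJ
      have h4 : (4 : ℤ) ∈ (fun x : ℤ => x ^ 2) ⁻¹' {x : ℤ | ∃ n : ℕ, x = 6 + 10 * (n : ℤ)} :=
        ⟨1, by norm_num⟩
      rw [hJ] at h4
      exact h4
    · have hT : (J.biUnion id).Nonempty := by
        obtain ⟨I, hI⟩ := Finset.nonempty_iff_ne_empty.mpr hJ0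
        obtain ⟨t, ht⟩ := hJne I hI
        exact ⟨t, Finset.mem_biUnion.mpr ⟨I, hI, ht⟩⟩
      set M := (J.biUnion id).max' hT with hM
      set n : ℕ := M.natAbs + 1 with hn
      have hx : (-(4 + 10 * (n : ℤ))) ∈
          (fun x : ℤ => x ^ 2) ⁻¹' {x : ℤ | ∃ m : ℕ, x = 6 + 10 * (m : ℤ)} :=
        ⟨1 + 8 * n + 10 * n ^ 2, by push_cast; ring⟩
      rw [hJ] at hx
      simp only [Set.mem_iUnion, Set.mem_iInter, Set.mem_setOf_eq] at hx
      obtain ⟨I, hIJ, hI⟩ := hx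
      obtain ⟨t, ht⟩ := hJne I hIJ
      obtain ⟨m, hm⟩ := hI t ht
      have htM : t ≤ M := Finset.le_max' _ t (Finset.mem_biUnion.mpr ⟨I, hIJ, ht⟩)
      omega
end
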